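/- arXiv:1504.02536 — 10 statements merged into one kernel-verified Lean document; each statement's English description precedes it below -/
import Mathlib

section
/- For a joint probability distribution P_{AE} on a finite product set A × E and any s ∈ (0,∞), the maximum over probability distributions Q_E on E of the conditional Rényi entropy H_{1+s}(A|E|P_{AE}‖Q_E) := -(1/s) log ∑_{a,e} P_{AE}(a,e)^{1+s} Q_E(e)^{-s} equals the Gallager-form conditional Rényi entropy H^↑_{1+s}(A|E|P_{AE}) := -((1+s)/s) log ∑_e (∑_a P_{AE}(a,e)^{1+s})^{1/(1+s)}, and the maximum is attained at Q_E(e) = (∑_a P_{AE}(a,e)^{1+s})^{1/(1+s)} / ∑_{e'} (∑_a P_{AE}(a,e')^{1+s})^{1/(1+s)}. -/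
open Finset

/-- The maximum over probability distributions `Q` on `E` of the conditional Rényi
entropy `H_{1+s}(A|E|P‖Q)` equals the Gallager form `H↑_{1+s}(A|E|P)`, and the
maximum is attained at the tilted distribution. -/
theorem conditional_renyi_sup_eq_gallager {A E : Type*} [Fintype A] [Fintype E]
    (P : A × E → ℝ) (hP : ∀ p, 0 ≤ P p) (hPsum : ∑ p, P p = 1)
    (hmarg : ∀ e, 0 < ∑ a, P (a, e))
    (s : ℝ) (hs : 0 < s) :
    (∀ Q : E → ℝ, (∀ e, 0 < Q e) → ∑ e, Q e = 1 →
      -(1/s) * Real.log (∑ e, ∑ a, P (a, e) ^ (1 + s) * Q e ^ (-s)) ≤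
        -((1 + s)/s) * Real.log (∑ e, (∑ a, P (a, e) ^ (1 + s)) ^ (1/(1 + s))))
    ∧
    -(1/s) * Real.log (∑ e, ∑ a, P (a, e) ^ (1 + s) *
        ((∑ a, P (a, e) ^ (1 + s)) ^ (1/(1 + s)) /
          ∑ e', (∑ a, P (a, e') ^ (1 + s)) ^ (1/(1 + s))) ^ (-s)) =
      -((1 + s)/s) * Real.log (∑ e, (∑ a, P (a, e) ^ (1 + s)) ^ (1/(1 + s))) := by
  have h1s : (0:ℝ) < 1 + s := by linarith
  haveI hEne : Nonempty E := by
    by_contra h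
    rw [not_nonempty_iff] at h
    simp at hPsum
  set f : E → ℝ := fun e => ∑ a, P (a, e) ^ (1 + s) with hf_def
  have hf_pos : ∀ e, 0 < f e := by
    intro e
    obtain ⟨a, -, ha⟩ : ∃ a ∈ Finset.univ, 0 < P (a, e) := by
      by_contra h
      push_neg at h
      have : ∑ a, P (a, e) ≤ 0 := Finset.sum_nonpos fun a _ => h a (Finset.mem_univ a)
      have := hmarg e
      linarith
    exact Finset.sum_pos' (fun b _ => Real.rpow_nonneg (hP _) _)
      ⟨a, Finset.mem_univ a, Real.rpow_pos_of_pos ha _⟩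
  set g : E → ℝ := fun e => f e ^ (1/(1+s)) with hg_def
  have hg_pos : ∀ e, 0 < g e := fun e => Real.rpow_pos_of_pos (hf_pos e) _
  set S : ℝ := ∑ e, g e with hS_def
  have hS_pos : 0 < S := Finset.sum_pos (fun e _ => hg_pos e) Finset.univ_nonempty
  have hpull : ∀ Q : E → ℝ, (∑ e, ∑ a, P (a, e) ^ (1 + s) * Q e ^ (-s))
      = ∑ e, f e * Q e ^ (-s) := by
    intro Q
    refine Finset.sum_congr rfl fun e _ => ?_
    rw [hf_def, Finset.sum_mul]
  constructor
  · intro Q hQpos hQsum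
    rw [hpull]
    set T : ℝ := ∑ e, f e * Q e ^ (-s) with hT_def
    have hT_pos : 0 < T :=
      Finset.sum_pos (fun e _ => mul_pos (hf_pos e)
        (Real.rpow_pos_of_pos (hQpos e) _)) Finset.univ_nonempty
    have hconj : Real.HolderConjugate (1+s) ((1+s)/s) := by
      rw [Real.holderConjugate_iff]
      constructor
      · linarith
      · field_simp
    have hHolder := Real.inner_le_Lp_mul_Lq_of_nonneg (Finset.univ (α := E))
      (f := fun e => (f e * Q e ^ (-s)) ^ (1/(1+s)))
      (g := fun e => Q e ^ (s/(1+s))) hconj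
      (fun e _ => Real.rpow_nonneg (mul_nonneg (hf_pos e).le
        (Real.rpow_nonneg (hQpos e).le _)) _)
      (fun e _ => Real.rpow_nonneg (hQpos e).le _)
    have hSle : S ≤ T ^ (1/(1+s)) := by
      have e1 : ∀ e : E, (f e * Q e ^ (-s)) ^ (1/(1+s)) * Q e ^ (s/(1+s)) = g e := by
        intro e
        rw [Real.mul_rpow (hf_pos e).le (Real.rpow_nonneg (hQpos e).le _),
          ← Real.rpow_mul (hQpos e).le, mul_assoc, ← Real.rpow_add (hQpos e)]
        have h0 : -s * (1/(1+s)) + s/(1+s) = 0 := by field_simp; ring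
        rw [h0, Real.rpow_zero, mul_one]
      have e2 : ∀ e : E, ((f e * Q e ^ (-s)) ^ (1/(1+s))) ^ (1+s) = f e * Q e ^ (-s) := by
        intro e
        rw [← Real.rpow_mul (mul_nonneg (hf_pos e).le (Real.rpow_nonneg (hQpos e).le _)),
          one_div, inv_mul_cancel₀ h1s.ne', Real.rpow_one]
      have e3 : ∀ e : E, (Q e ^ (s/(1+s))) ^ ((1+s)/s) = Q e := by
        intro e
        rw [← Real.rpow_mul (hQpos e).le, div_mul_div_comm,
          mul_comm s (1+s), div_self (by positivity), Real.rpow_one]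
      calc S = ∑ e, (f e * Q e ^ (-s)) ^ (1/(1+s)) * Q e ^ (s/(1+s)) := by
              rw [hS_def]; exact (Finset.sum_congr rfl fun e _ => (e1 e)).symm
        _ ≤ (∑ e, ((f e * Q e ^ (-s)) ^ (1/(1+s))) ^ (1+s)) ^ (1/(1+s)) *
              (∑ e, (Q e ^ (s/(1+s))) ^ ((1+s)/s)) ^ (1/((1+s)/s)) := hHolder
        _ = T ^ (1/(1+s)) := by
              rw [show (∑ e, ((f e * Q e ^ (-s)) ^ (1/(1+s))) ^ (1+s)) = T from
                    Finset.sum_congr rfl fun e _ => e2 e,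
                  show (∑ e, (Q e ^ (s/(1+s))) ^ ((1+s)/s)) = 1 by
                    rw [Finset.sum_congr rfl fun e _ => e3 e]; exact hQsum,
                  Real.one_rpow, mul_one]
    have hlog : (1+s) * Real.log S ≤ Real.log T := by
      have h1 : Real.log S ≤ Real.log (T ^ (1/(1+s))) := Real.log_le_log hS_pos hSle
      rw [Real.log_rpow hT_pos] at h1
      calc (1+s) * Real.log S ≤ (1+s) * (1/(1+s) * Real.log T) :=
            mul_le_mul_of_nonneg_left h1 h1s.le
        _ = Real.log T := by field_simp
    have hneg : -(1/s) ≤ (0:ℝ) := by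
      have : (0:ℝ) < 1/s := by positivity
      linarith
    have h2 : -(1/s) * Real.log T ≤ -(1/s) * ((1+s) * Real.log S) :=
      mul_le_mul_of_nonpos_left hlog hneg
    calc -(1/s) * Real.log T ≤ -(1/s) * ((1+s) * Real.log S) := h2
      _ = -((1+s)/s) * Real.log S := by ring
  · rw [hpull]
    have hterm : ∀ e : E, f e * (g e / S) ^ (-s) = g e * S ^ s := by
      intro e
      rw [Real.div_rpow (hg_pos e).le hS_pos.le]
      rw [Real.rpow_neg hS_pos.le, div_eq_mul_inv, inv_inv]
      rw [show f e * (g e ^ (-s) * S ^ s) = (f e * g e ^ (-s)) * S ^ s by ring]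
      congr 1
      rw [hg_def, ← Real.rpow_mul (hf_pos e).le]
      nth_rewrite 1 [show f e = f e ^ (1:ℝ) from (Real.rpow_one _).symm]
      rw [← Real.rpow_add (hf_pos e)]
      congr 1
      field_simp
      ring
    rw [show (∑ e, f e * (g e / S) ^ (-s)) = S ^ (1+s) by
      rw [Finset.sum_congr rfl fun e _ => hterm e, ← Finset.sum_mul]
      rw [← hS_def]
      nth_rewrite 1 [show S = S ^ (1:ℝ) from (Real.rpow_one _).symm]
      rw [← Real.rpow_add hS_pos]]
    rw [Real.log_rpow hS_pos]
    ring
end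

section
/- For a joint probability distribution P_{AE} on a finite set A × E and s > -1, s ≠ 0, the Rényi security measure D_{1+s}(P_{AE} ‖ P_{mix,A} × P_E) decomposes as the sum of Sibson's Rényi mutual information I^{Sibson}_{1+s}(E∧A) = ((1+s)/s) log ∑_a P_A(a) (∑_e P_{E|A}(e|a)^{1+s} P_E(e)^{-s})^{1/(1+s)} and the Rényi divergence D_{1+s}(Q_A^{(s)} ‖ P_{mix,A}), where Q_A^{(s)}(a) := g_s(a)^{1/(1+s)} / ∑_{a'} g_s(a')^{1/(1+s)} with g_s(a) := ∑_e P_{AE}(a,e)^{1+s} P_E(e)^{-s}. -/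
open Finset

/-- Sibson-type decomposition: `D_{1+s}(P_{AE} ‖ P_mix × P_E)` equals Sibson's Rényi
mutual information plus `D_{1+s}(Q_A^{(s)} ‖ P_mix)`. -/
theorem renyi_divergence_sibson_decomposition {A E : Type*} [Fintype A] [Fintype E]
    [Nonempty A]
    (P : A × E → ℝ) (hP : ∀ p, 0 ≤ P p) (hPsum : ∑ p, P p = 1)
    (hPA : ∀ a, 0 < ∑ e, P (a, e)) (hPE : ∀ e, 0 < ∑ a, P (a, e))
    (s : ℝ) (hs : -1 < s) (hs0 : s ≠ 0) :
    let PE : E → ℝ := fun e => ∑ a, P (a, e)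
    let g : A → ℝ := fun a => ∑ e, P (a, e) ^ (1 + s) * PE e ^ (-s)
    let QA : A → ℝ := fun a => g a ^ (1/(1 + s)) / ∑ a', g a' ^ (1/(1 + s))
    (1/s) * Real.log (∑ p : A × E,
        P p ^ (1 + s) * ((Fintype.card A : ℝ)⁻¹ * PE p.2) ^ (-s)) =
      ((1 + s)/s) * Real.log (∑ a, g a ^ (1/(1 + s))) +
      (1/s) * Real.log (∑ a, QA a ^ (1 + s) * ((Fintype.card A : ℝ)⁻¹) ^ (-s)) := by
  intro PE g QA
  have hs1 : (0:ℝ) < 1 + s := by linarith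
  have hc : (0:ℝ) < (Fintype.card A : ℝ)⁻¹ := by
    have : (0:ℝ) < (Fintype.card A : ℝ) := by
      exact_mod_cast Fintype.card_pos
    positivity
  have hcpow : (0:ℝ) < ((Fintype.card A : ℝ)⁻¹) ^ (-s) := Real.rpow_pos_of_pos hc _
  have hg : ∀ a, 0 < g a := by
    intro a
    obtain ⟨e, he⟩ : ∃ e, 0 < P (a, e) := by
      by_contra h
      push_neg at h
      have : ∑ e, P (a, e) = 0 := Finset.sum_eq_zero fun e _ => le_antisymm (h e) (hP _)
      exact absurd this (hPA a).ne'
    refine Finset.sum_pos' (fun e _ => mul_nonneg (Real.rpow_nonneg (hP _) _)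
      (Real.rpow_nonneg (hPE e).le _)) ⟨e, Finset.mem_univ e, ?_⟩
    exact mul_pos (Real.rpow_pos_of_pos he _) (Real.rpow_pos_of_pos (hPE e) _)
  have hgsum : 0 < ∑ a, g a := Finset.sum_pos (fun a _ => hg a) Finset.univ_nonempty
  have hS : 0 < ∑ a, g a ^ (1/(1 + s)) :=
    Finset.sum_pos (fun a _ => Real.rpow_pos_of_pos (hg a) _) Finset.univ_nonempty
  -- LHS sum
  have hL : (∑ p : A × E, P p ^ (1 + s) * ((Fintype.card A : ℝ)⁻¹ * PE p.2) ^ (-s)) =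
      ((Fintype.card A : ℝ)⁻¹) ^ (-s) * ∑ a, g a := by
    rw [Fintype.sum_prod_type, Finset.mul_sum]
    refine Finset.sum_congr rfl fun a _ => ?_
    rw [Finset.mul_sum]
    refine Finset.sum_congr rfl fun e _ => ?_
    rw [Real.mul_rpow hc.le (hPE e).le]
    ring
  -- RHS second sum
  have hQ : ∀ a, QA a ^ (1 + s) = g a / (∑ a', g a' ^ (1/(1 + s))) ^ (1 + s) := by
    intro a
    show (g a ^ (1/(1 + s)) / ∑ a', g a' ^ (1/(1 + s))) ^ (1 + s) = _
    rw [Real.div_rpow (Real.rpow_nonneg (hg a).le _) hS.le,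
      ← Real.rpow_mul (hg a).le, one_div_mul_cancel hs1.ne', Real.rpow_one]
  have hR : (∑ a, QA a ^ (1 + s) * ((Fintype.card A : ℝ)⁻¹) ^ (-s)) =
      ((Fintype.card A : ℝ)⁻¹) ^ (-s) * (∑ a, g a) / (∑ a', g a' ^ (1/(1 + s))) ^ (1 + s) := by
    rw [Finset.sum_congr rfl fun a _ => by rw [hQ a]]
    simp only [div_mul_eq_mul_div]
    rw [← Finset.sum_div, ← Finset.sum_mul]
    ring
  rw [hL, hR]
  have hSpow : (0:ℝ) < (∑ a', g a' ^ (1/(1 + s))) ^ (1 + s) := Real.rpow_pos_of_pos hS _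
  rw [Real.log_mul hcpow.ne' hgsum.ne', Real.log_div (by positivity) hSpow.ne',
    Real.log_mul hcpow.ne' hgsum.ne', Real.log_rpow hS]
  ring
end

section
/- For any function f : A → M between finite sets, any joint distribution P_{AE} on A × E, and any s > -1 with s ≠ 0, the conditional Rényi entropy does not increase under application of f to the first coordinate: H_{1+s}(f(A)|E|P_{AE}) ≤ H_{1+s}(A|E|P_{AE}), where H_{1+s}(A|E|P_{AE}) := -(1/s) log ∑_e P_E(e) ∑_a P_{A|E}(a|e)^{1+s}. -/
open Finset

open scoped NNReal

lemma two_var_sup {a b p : ℝ} (ha : 0 ≤ a) (hb : 0 ≤ b) (hp : 1 ≤ p) :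
    a ^ p + b ^ p ≤ (a + b) ^ p := by
  have h : ((a.toNNReal ^ p + b.toNNReal ^ p : ℝ≥0) : ℝ) ≤ (((a.toNNReal + b.toNNReal) ^ p : ℝ≥0) : ℝ) :=
    NNReal.coe_le_coe.2 (NNReal.add_rpow_le_rpow_add a.toNNReal b.toNNReal hp)
  simpa [NNReal.coe_rpow, Real.coe_toNNReal _ ha, Real.coe_toNNReal _ hb,
    Real.coe_toNNReal _ (add_nonneg ha hb)] using h

lemma two_var_sub {a b p : ℝ} (ha : 0 ≤ a) (hb : 0 ≤ b) (hp0 : 0 ≤ p) (hp : p ≤ 1) :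
    (a + b) ^ p ≤ a ^ p + b ^ p := by
  have h : (((a.toNNReal + b.toNNReal) ^ p : ℝ≥0) : ℝ) ≤ ((a.toNNReal ^ p + b.toNNReal ^ p : ℝ≥0) : ℝ) :=
    NNReal.coe_le_coe.2 (NNReal.rpow_add_le_add_rpow a.toNNReal b.toNNReal hp0 hp)
  simpa [NNReal.coe_rpow, Real.coe_toNNReal _ ha, Real.coe_toNNReal _ hb,
    Real.coe_toNNReal _ (add_nonneg ha hb)] using h

lemma sum_sup {ι : Type*} (t : Finset ι) (x : ι → ℝ) {p : ℝ} (hx : ∀ i ∈ t, 0 ≤ x i)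
    (hp : 1 ≤ p) : ∑ i ∈ t, x i ^ p ≤ (∑ i ∈ t, x i) ^ p := by
  induction t using Finset.cons_induction with
  | empty => simp [Real.zero_rpow (by linarith : p ≠ 0)]
  | cons a t' hnot ih =>
    rw [Finset.sum_cons, Finset.sum_cons]
    calc x a ^ p + ∑ i ∈ t', x i ^ p ≤ x a ^ p + (∑ i ∈ t', x i) ^ p := by
          gcongr; exact ih (fun i hi => hx i (Finset.mem_cons_of_mem hi))
      _ ≤ (x a + ∑ i ∈ t', x i) ^ p :=
          two_var_sup (hx a (Finset.mem_cons_self a t'))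
            (Finset.sum_nonneg fun i hi => hx i (Finset.mem_cons_of_mem hi)) hp

lemma sum_sub {ι : Type*} (t : Finset ι) (x : ι → ℝ) {p : ℝ} (hx : ∀ i ∈ t, 0 ≤ x i)
    (hp0 : 0 < p) (hp : p ≤ 1) : (∑ i ∈ t, x i) ^ p ≤ ∑ i ∈ t, x i ^ p := by
  induction t using Finset.cons_induction with
  | empty => simp [Real.zero_rpow (ne_of_gt hp0)]
  | cons a t' hnot ih =>
    rw [Finset.sum_cons, Finset.sum_cons]
    calc (x a + ∑ i ∈ t', x i) ^ p ≤ x a ^ p + (∑ i ∈ t', x i) ^ p :=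
          two_var_sub (hx a (Finset.mem_cons_self a t'))
            (Finset.sum_nonneg fun i hi => hx i (Finset.mem_cons_of_mem hi)) hp0.le hp
      _ ≤ x a ^ p + ∑ i ∈ t', x i ^ p := by
          gcongr; exact ih (fun i hi => hx i (Finset.mem_cons_of_mem hi))


/-- Data processing inequality for the conditional Rényi entropy: applying a
function `f` to the first coordinate cannot increase `H_{1+s}(A|E|P_{AE})`. -/
theorem conditional_renyi_data_processing {A E M : Type*}
    [Fintype A] [Fintype E] [Fintype M] [DecidableEq M]
    (f : A → M) (P : A × E → ℝ) (hP : ∀ p, 0 ≤ P p) (hPsum : ∑ p, P p = 1)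
    (s : ℝ) (hs : -1 < s) (hs0 : s ≠ 0) :
    -(1/s) * Real.log (∑ e, ∑ m,
        (∑ a ∈ Finset.univ.filter (fun a => f a = m), P (a, e)) ^ (1 + s) *
          (∑ a, P (a, e)) ^ (-s)) ≤
      -(1/s) * Real.log (∑ e, ∑ a,
        P (a, e) ^ (1 + s) * (∑ a', P (a', e)) ^ (-s)) := by
  -- find a point with positive probability
  obtain ⟨⟨a0, e0⟩, hp0⟩ : ∃ p, 0 < P p := by
    by_contra h
    push_neg at h
    have : ∑ p : A × E, P p = 0 :=
      Finset.sum_eq_zero fun p _ => le_antisymm (h p) (hP p)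
    rw [hPsum] at this; norm_num at this
  have hPE0 : 0 < ∑ a, P (a, e0) :=
    lt_of_lt_of_le hp0 (Finset.single_le_sum (fun a _ => hP (a, e0)) (Finset.mem_univ a0))
  have hc0 : 0 < (∑ a, P (a, e0)) ^ (-s) := Real.rpow_pos_of_pos hPE0 _
  set X := ∑ e, ∑ m,
      (∑ a ∈ Finset.univ.filter (fun a => f a = m), P (a, e)) ^ (1 + s) *
        (∑ a, P (a, e)) ^ (-s) with hX
  set Y := ∑ e, ∑ a, P (a, e) ^ (1 + s) * (∑ a', P (a', e)) ^ (-s) with hY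
  have hs1 : (0:ℝ) < 1 + s := by linarith
  -- positivity of Y
  have hYpos : 0 < Y := by
    have hterm : 0 < P (a0, e0) ^ (1 + s) * (∑ a', P (a', e0)) ^ (-s) :=
      mul_pos (Real.rpow_pos_of_pos hp0 _) hc0
    have h1 : 0 < ∑ a, P (a, e0) ^ (1 + s) * (∑ a', P (a', e0)) ^ (-s) := by
      refine lt_of_lt_of_le hterm (Finset.single_le_sum
        (f := fun a => P (a, e0) ^ (1 + s) * (∑ a', P (a', e0)) ^ (-s))
        ?_ (Finset.mem_univ a0))
      intro a _
      exact mul_nonneg (Real.rpow_nonneg (hP _) _) hc0.le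
    refine lt_of_lt_of_le h1 (Finset.single_le_sum
      (f := fun e => ∑ a, P (a, e) ^ (1 + s) * (∑ a', P (a', e)) ^ (-s))
      ?_ (Finset.mem_univ e0))
    intro e _
    exact Finset.sum_nonneg fun a _ =>
      mul_nonneg (Real.rpow_nonneg (hP _) _) (Real.rpow_nonneg
        (Finset.sum_nonneg fun a' _ => hP _) _)
  -- positivity of X
  have hXpos : 0 < X := by
    have hfib : 0 < ∑ a ∈ Finset.univ.filter (fun a => f a = f a0), P (a, e0) :=
      lt_of_lt_of_le hp0 (Finset.single_le_sum (fun a _ => hP (a, e0))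
        (Finset.mem_filter.2 ⟨Finset.mem_univ a0, rfl⟩))
    have hterm : 0 < (∑ a ∈ Finset.univ.filter (fun a => f a = f a0), P (a, e0)) ^ (1 + s) *
        (∑ a, P (a, e0)) ^ (-s) := mul_pos (Real.rpow_pos_of_pos hfib _) hc0
    have hnn : ∀ (e : E) (m : M), 0 ≤
        (∑ a ∈ Finset.univ.filter (fun a => f a = m), P (a, e)) ^ (1 + s) *
          (∑ a, P (a, e)) ^ (-s) := fun e m =>
      mul_nonneg (Real.rpow_nonneg (Finset.sum_nonneg fun a _ => hP _) _)
        (Real.rpow_nonneg (Finset.sum_nonneg fun a _ => hP _) _)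
    have h1 : 0 < ∑ m, (∑ a ∈ Finset.univ.filter (fun a => f a = m), P (a, e0)) ^ (1 + s) *
        (∑ a, P (a, e0)) ^ (-s) :=
      lt_of_lt_of_le hterm (Finset.single_le_sum (fun m _ => hnn e0 m) (Finset.mem_univ (f a0)))
    exact lt_of_lt_of_le h1 (Finset.single_le_sum
      (fun e _ => Finset.sum_nonneg fun m _ => hnn e m) (Finset.mem_univ e0))
  -- rewrite Y's inner sum fiberwise
  have hfiber : ∀ e : E, ∑ a, P (a, e) ^ (1 + s) =
      ∑ m, ∑ a ∈ Finset.univ.filter (fun a => f a = m), P (a, e) ^ (1 + s) := by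
    intro e
    exact (Finset.sum_fiberwise Finset.univ f (fun a => P (a, e) ^ (1 + s))).symm
  rcases lt_or_gt_of_ne hs0 with hneg | hpos
  · -- s < 0 : 1+s ≤ 1, X ≤ Y, coefficient -(1/s) > 0
    have hXY : X ≤ Y := by
      apply Finset.sum_le_sum
      intro e _
      rw [← Finset.sum_mul, ← Finset.sum_mul]
      apply mul_le_mul_of_nonneg_right _ (Real.rpow_nonneg (Finset.sum_nonneg fun a _ => hP _) _)
      rw [hfiber e]
      apply Finset.sum_le_sum
      intro m _
      exact sum_sub _ _ (fun a _ => hP _) hs1 (by linarith)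
    have hlog : Real.log X ≤ Real.log Y := Real.log_le_log hXpos hXY
    have hcoef : 0 < -(1/s) := by
      rw [neg_pos]
      exact div_neg_of_pos_of_neg one_pos hneg
    exact mul_le_mul_of_nonneg_left hlog hcoef.le
  · -- s > 0 : 1+s ≥ 1, Y ≤ X, coefficient -(1/s) < 0
    have hYX : Y ≤ X := by
      apply Finset.sum_le_sum
      intro e _
      rw [← Finset.sum_mul, ← Finset.sum_mul]
      apply mul_le_mul_of_nonneg_right _ (Real.rpow_nonneg (Finset.sum_nonneg fun a _ => hP _) _)
      rw [hfiber e]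
      apply Finset.sum_le_sum
      intro m _
      exact sum_sup _ _ (fun a _ => hP _) (by linarith)
    have hlog : Real.log Y ≤ Real.log X := Real.log_le_log hYpos hYX
    have hcoef : -(1/s) ≤ 0 := by
      rw [neg_nonpos]
      positivity
    exact mul_le_mul_of_nonpos_left hlog hcoef
end

section
/- Leftover-hash-type bound: Let f_X : A → {1,…,M} be a random hash function (indexed by a random variable X) that is ε-almost universal₂, i.e., Pr(f_X(a₁)=f_X(a₂)) ≤ ε/M for all distinct a₁,a₂ ∈ A. Then for any joint distribution P_{AE} on A × E and any s ∈ [0,1], exp(s·C_{1+s}(f_X(A)|E,X)) ≤ ε^s + M^s · exp(-s·H_{1+s}(A|E|P_{AE})), where C_{1+s}(f_X(A)|E,X) := log M - H_{1+s}(f_X(A)|E,X) and H_{1+s}(f_X(A)|E,X) := -(1/s) log E_X ∑_e P_E(e) ∑_{i=1}^M (∑_{a∈f_X^{-1}(i)} P_{A|E}(a|e))^{1+s}. -/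
open Finset

/-- Concavity of `t ↦ t^s` for `s ∈ (0,1]`: a weighted sum of `s`-th powers is at most
the `s`-th power of the weighted sum. -/
lemma concave_rpow_sum {ι : Type*} [Fintype ι] (w z : ι → ℝ) (hw : ∀ i, 0 ≤ w i)
    (hw1 : ∑ i, w i = 1) (hz : ∀ i, 0 ≤ z i) {s : ℝ} (hs : 0 < s) (hs1 : s ≤ 1) :
    ∑ i, w i * (z i) ^ s ≤ (∑ i, w i * z i) ^ s := by
  have hp : (1 : ℝ) ≤ 1 / s := (le_div_iff₀ hs).mpr (by linarith)
  have h := Real.arith_mean_le_rpow_mean (s := Finset.univ) w (fun i => z i ^ s)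
    (fun i _ => hw i) hw1 (fun i _ => Real.rpow_nonneg (hz i) s) hp
  have hzz : ∀ i : ι, (z i ^ s) ^ (1 / s) = z i := by
    intro i
    rw [← Real.rpow_mul (hz i), mul_one_div_cancel hs.ne', Real.rpow_one]
  simp only [hzz] at h
  rw [one_div_one_div] at h
  exact h

/-- Subadditivity of `t ↦ t^s` for `s ∈ [0,1]` on nonnegative reals. -/
lemma rpow_add_le_add_rpow' {x y s : ℝ} (hx : 0 ≤ x) (hy : 0 ≤ y) (hs : 0 ≤ s) (hs1 : s ≤ 1) :
    (x + y) ^ s ≤ x ^ s + y ^ s := by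
  have h := NNReal.rpow_add_le_add_rpow (Real.toNNReal x) (Real.toNNReal y) hs hs1
  have h2 : ((x.toNNReal + y.toNNReal : NNReal) : ℝ) ^ s
      ≤ ((x.toNNReal : ℝ)) ^ s + ((y.toNNReal : ℝ)) ^ s := by
    exact_mod_cast h
  rwa [NNReal.coe_add, Real.coe_toNNReal x hx, Real.coe_toNNReal y hy] at h2

/-- Leftover-hash-type bound: for an `ε`-almost universal₂ random hash `f_X` into
`{1,…,M}` and `s ∈ (0,1]`,
`exp(s·C_{1+s}(f_X(A)|E,X)) ≤ ε^s + M^s · exp(-s·H_{1+s}(A|E|P_{AE}))`. -/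
theorem leftover_hash_renyi_plus {A E X : Type*} [Fintype A] [Fintype E] [Fintype X]
    (M : ℕ) (hM : 0 < M) (f : X → A → Fin M)
    (μ : X → ℝ) (hμ : ∀ x, 0 ≤ μ x) (hμsum : ∑ x, μ x = 1)
    (ε : ℝ) (hε : 0 ≤ ε)
    (huniv : ∀ a₁ a₂ : A, a₁ ≠ a₂ →
      ∑ x ∈ Finset.univ.filter (fun x => f x a₁ = f x a₂), μ x ≤ ε / M)
    (PE : E → ℝ) (hPE : ∀ e, 0 ≤ PE e) (hPEsum : ∑ e, PE e = 1)
    (PA : A → E → ℝ) (hPA : ∀ a e, 0 ≤ PA a e) (hPAsum : ∀ e, ∑ a, PA a e = 1)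
    (s : ℝ) (hs : 0 < s) (hs1 : s ≤ 1) :
    (M : ℝ) ^ s * (∑ x, μ x * ∑ e, PE e * ∑ i : Fin M,
        (∑ a ∈ Finset.univ.filter (fun a => f x a = i), PA a e) ^ (1 + s)) ≤
      ε ^ s + (M : ℝ) ^ s * ∑ e, PE e * ∑ a, PA a e ^ (1 + s) := by
  classical
  set σ : X → E → Fin M → ℝ := fun x e i => ∑ a ∈ Finset.univ.filter (fun a => f x a = i), PA a e
    with hσdef
  have hσ0 : ∀ x e i, 0 ≤ σ x e i := fun x e i => Finset.sum_nonneg fun a _ => hPA a e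
  have hMR : (0 : ℝ) < M := by exact_mod_cast hM
  -- Step 1: rewrite the inner sum over fibers as a sum over a
  have step1 : ∀ x e, ∑ i : Fin M, (σ x e i) ^ (1 + s)
      = ∑ a, PA a e * (σ x e (f x a)) ^ s := by
    intro x e
    have h1 : ∀ i : Fin M, (σ x e i) ^ (1 + s)
        = ∑ a ∈ Finset.univ.filter (fun a => f x a = i), PA a e * (σ x e i) ^ s := by
      intro i
      rw [Real.rpow_add' (hσ0 x e i) (by positivity), Real.rpow_one, ← Finset.sum_mul]
    calc ∑ i : Fin M, (σ x e i) ^ (1 + s)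
        = ∑ i : Fin M, ∑ a ∈ Finset.univ.filter (fun a => f x a = i),
            PA a e * (σ x e (f x a)) ^ s := by
          refine Finset.sum_congr rfl fun i _ => ?_
          rw [h1 i]
          refine Finset.sum_congr rfl fun a ha => ?_
          rw [(Finset.mem_filter.mp ha).2]
      _ = ∑ a, PA a e * (σ x e (f x a)) ^ s :=
          Finset.sum_fiberwise Finset.univ (fun a => f x a) _
  -- Step 4: expected collision mass bound
  have step4 : ∀ e a, ∑ x, μ x * σ x e (f x a) ≤ PA a e + ε / M := by
    intro e a
    have hswap : ∑ x, μ x * σ x e (f x a)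
        = ∑ a', PA a' e * ∑ x ∈ Finset.univ.filter (fun x => f x a' = f x a), μ x := by
      simp only [hσdef, Finset.mul_sum, Finset.sum_filter]
      rw [Finset.sum_comm]
      refine Finset.sum_congr rfl fun a' _ => ?_
      refine Finset.sum_congr rfl fun x _ => ?_
      by_cases h : f x a' = f x a <;> simp [h, mul_comm]
    rw [hswap, ← Finset.add_sum_erase _ _ (Finset.mem_univ a)]
    have ha : PA a e * ∑ x ∈ Finset.univ.filter (fun x => f x a = f x a), μ x = PA a e := by
      simp [hμsum]
    rw [ha]
    have hrest : ∑ a' ∈ Finset.univ.erase a,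
        PA a' e * ∑ x ∈ Finset.univ.filter (fun x => f x a' = f x a), μ x ≤ ε / M := by
      calc ∑ a' ∈ Finset.univ.erase a,
            PA a' e * ∑ x ∈ Finset.univ.filter (fun x => f x a' = f x a), μ x
          ≤ ∑ a' ∈ Finset.univ.erase a, PA a' e * (ε / M) := by
            refine Finset.sum_le_sum fun a' ha' => ?_
            exact mul_le_mul_of_nonneg_left
              (huniv a' a (Finset.ne_of_mem_erase ha')) (hPA a' e)
        _ = (∑ a' ∈ Finset.univ.erase a, PA a' e) * (ε / M) := by rw [Finset.sum_mul]
        _ ≤ 1 * (ε / M) := by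
            refine mul_le_mul_of_nonneg_right ?_ (by positivity)
            calc ∑ a' ∈ Finset.univ.erase a, PA a' e ≤ ∑ a', PA a' e :=
                  Finset.sum_le_sum_of_subset_of_nonneg (Finset.erase_subset _ _)
                    (fun a' _ _ => hPA a' e)
              _ = 1 := hPAsum e
        _ = ε / M := one_mul _
    linarith
  -- Pointwise bound on the expected s-th power
  have key : ∀ e a, ∑ x, μ x * (σ x e (f x a)) ^ s ≤ PA a e ^ s + (ε / M) ^ s := by
    intro e a
    calc ∑ x, μ x * (σ x e (f x a)) ^ s
        ≤ (∑ x, μ x * σ x e (f x a)) ^ s :=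
          concave_rpow_sum μ (fun x => σ x e (f x a)) hμ hμsum
            (fun x => hσ0 x e (f x a)) hs hs1
      _ ≤ (PA a e + ε / M) ^ s := by
          refine Real.rpow_le_rpow ?_ (step4 e a) hs.le
          exact Finset.sum_nonneg fun x _ => mul_nonneg (hμ x) (hσ0 x e (f x a))
      _ ≤ PA a e ^ s + (ε / M) ^ s :=
          rpow_add_le_add_rpow' (hPA a e) (by positivity) hs.le hs1
  -- Main chain
  have main : ∑ x, μ x * ∑ e, PE e * ∑ i : Fin M, (σ x e i) ^ (1 + s)
      ≤ (∑ e, PE e * ∑ a, PA a e ^ (1 + s)) + (ε / M) ^ s := by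
    have hre : ∑ x, μ x * ∑ e, PE e * ∑ i : Fin M, (σ x e i) ^ (1 + s)
        = ∑ e, PE e * ∑ a, PA a e * ∑ x, μ x * (σ x e (f x a)) ^ s := by
      simp only [step1, Finset.mul_sum]
      rw [Finset.sum_comm]
      refine Finset.sum_congr rfl fun e _ => ?_
      rw [Finset.sum_comm]
      refine Finset.sum_congr rfl fun a _ => ?_
      refine Finset.sum_congr rfl fun x _ => ?_
      ring
    rw [hre]
    calc ∑ e, PE e * ∑ a, PA a e * ∑ x, μ x * (σ x e (f x a)) ^ s
        ≤ ∑ e, PE e * ∑ a, PA a e * (PA a e ^ s + (ε / M) ^ s) := by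
          refine Finset.sum_le_sum fun e _ => ?_
          refine mul_le_mul_of_nonneg_left ?_ (hPE e)
          refine Finset.sum_le_sum fun a _ => ?_
          exact mul_le_mul_of_nonneg_left (key e a) (hPA a e)
      _ = ∑ e, PE e * (∑ a, PA a e ^ (1 + s) + (ε / M) ^ s) := by
          refine Finset.sum_congr rfl fun e _ => ?_
          congr 1
          simp only [mul_add]
          rw [Finset.sum_add_distrib]
          congr 1
          · refine Finset.sum_congr rfl fun a _ => ?_
            rw [Real.rpow_add' (hPA a e) (by positivity), Real.rpow_one]
          · rw [← Finset.sum_mul, hPAsum e, one_mul]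
      _ = (∑ e, PE e * ∑ a, PA a e ^ (1 + s)) + (ε / M) ^ s := by
          simp only [mul_add, Finset.sum_add_distrib]
          rw [← Finset.sum_mul, hPEsum, one_mul]
  have hMs : (0 : ℝ) < (M : ℝ) ^ s := Real.rpow_pos_of_pos hMR s
  have hdiv : (M : ℝ) ^ s * (ε / M) ^ s = ε ^ s := by
    rw [Real.div_rpow hε hMR.le]
    field_simp
  calc (M : ℝ) ^ s * (∑ x, μ x * ∑ e, PE e * ∑ i : Fin M,
        (∑ a ∈ Finset.univ.filter (fun a => f x a = i), PA a e) ^ (1 + s))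
      ≤ (M : ℝ) ^ s * ((∑ e, PE e * ∑ a, PA a e ^ (1 + s)) + (ε / M) ^ s) :=
        mul_le_mul_of_nonneg_left main hMs.le
    _ = ε ^ s + (M : ℝ) ^ s * ∑ e, PE e * ∑ a, PA a e ^ (1 + s) := by
        rw [mul_add, hdiv]; ring
end

section
/- Exponent-form direct bound: For a universal₂ random hash function f_X : A → {1,…,M} (i.e., Pr(f_X(a₁)=f_X(a₂)) ≤ 1/M for distinct a₁,a₂) and any s ∈ [0,1], exp((s/(1+s)) C^↑_{1+s}(f_X(A)|E,X)) ≤ 1 + (1/(1+s)) M^s exp(-s H_{1+s}(A|E|P_{AE})). -/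
open Finset

lemma aux_rpow_subadd {u v p : ℝ} (hu : 0 ≤ u) (hv : 0 ≤ v) (hp : 0 ≤ p) (hp1 : p ≤ 1) :
    (u + v) ^ p ≤ u ^ p + v ^ p := by
  have h := NNReal.coe_le_coe.2 (NNReal.rpow_add_le_add_rpow u.toNNReal v.toNNReal hp hp1)
  simpa [NNReal.coe_rpow, Real.coe_toNNReal u hu, Real.coe_toNNReal v hv] using h

lemma aux_jensen_rpow {ι : Type*} (t : Finset ι) (w z : ι → ℝ) (hw : ∀ i ∈ t, 0 ≤ w i)
    (hw1 : ∑ i ∈ t, w i = 1) (hz : ∀ i ∈ t, 0 ≤ z i) {q : ℝ} (hq0 : 0 < q) (hq1 : q ≤ 1) :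
    ∑ i ∈ t, w i * z i ^ q ≤ (∑ i ∈ t, w i * z i) ^ q := by
  have hp : (1:ℝ) ≤ 1 / q := by rw [le_div_iff₀ hq0]; linarith
  have h := Real.arith_mean_le_rpow_mean t w (fun i => z i ^ q) hw hw1
      (fun i hi => Real.rpow_nonneg (hz i hi) q) hp
  have h2 : ∑ i ∈ t, w i * (z i ^ q) ^ (1 / q) = ∑ i ∈ t, w i * z i :=
    Finset.sum_congr rfl (fun i hi => by
      rw [← Real.rpow_mul (hz i hi), mul_one_div, div_self hq0.ne', Real.rpow_one])
  rw [h2, one_div_one_div] at h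
  exact h

lemma aux_bernoulli {y p : ℝ} (hy : 0 ≤ y) (hp0 : 0 ≤ p) (hp1 : p ≤ 1) :
    (1 + y) ^ p ≤ 1 + p * y := by
  have h := Real.geom_mean_le_arith_mean2_weighted hp0 (by linarith : (0:ℝ) ≤ 1 - p)
      (by linarith : (0:ℝ) ≤ 1 + y) zero_le_one (by ring)
  rw [Real.one_rpow, mul_one, mul_one] at h
  nlinarith [h]

/-- Exponent-form direct bound: for a universal₂ random hash `f_X` into `{1,…,M}`
and `s ∈ (0,1]`,
`exp((s/(1+s)) C↑_{1+s}(f_X(A)|E,X)) ≤ 1 + (1/(1+s)) M^s exp(-s H_{1+s}(A|E|P_{AE}))`. -/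
theorem exponent_direct_bound_gallager {A E X : Type*} [Fintype A] [Fintype E] [Fintype X]
    (M : ℕ) (hM : 0 < M) (f : X → A → Fin M)
    (μ : X → ℝ) (hμ : ∀ x, 0 ≤ μ x) (hμsum : ∑ x, μ x = 1)
    (huniv : ∀ a₁ a₂ : A, a₁ ≠ a₂ →
      ∑ x ∈ Finset.univ.filter (fun x => f x a₁ = f x a₂), μ x ≤ 1 / M)
    (PE : E → ℝ) (hPE : ∀ e, 0 ≤ PE e) (hPEsum : ∑ e, PE e = 1)
    (PA : A → E → ℝ) (hPA : ∀ a e, 0 ≤ PA a e) (hPAsum : ∀ e, ∑ a, PA a e = 1)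
    (s : ℝ) (hs : 0 < s) (hs1 : s ≤ 1) :
    (M : ℝ) ^ (s/(1 + s)) * (∑ x, μ x * ∑ e, PE e *
        (∑ i : Fin M,
          (∑ a ∈ Finset.univ.filter (fun a => f x a = i), PA a e) ^ (1 + s))
            ^ (1/(1 + s))) ≤
      1 + (1/(1 + s)) * (M : ℝ) ^ s * ∑ e, PE e * ∑ a, PA a e ^ (1 + s) := by
  classical
  have hs0 : (0:ℝ) < 1 + s := by linarith
  have hMpos : (0:ℝ) < (M:ℝ) := by exact_mod_cast hM
  set Q : X → E → Fin M → ℝ :=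
    fun x e i => ∑ a ∈ Finset.univ.filter (fun a => f x a = i), PA a e with hQdef
  set T : X → E → ℝ := fun x e => ∑ i, Q x e i ^ (1 + s) with hTdef
  set S : E → ℝ := fun e => ∑ a, PA a e ^ (1 + s) with hSdef
  set rest : X → A → E → ℝ :=
    fun x a e => ∑ a' ∈ Finset.univ.filter (fun a' => a' ≠ a ∧ f x a' = f x a), PA a' e
    with hrestdef
  set R : X → E → ℝ := fun x e => ∑ a, PA a e * rest x a e ^ s with hRdef
  have hQ0 : ∀ x e i, 0 ≤ Q x e i := fun x e i =>
    Finset.sum_nonneg fun a _ => hPA a e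
  have hT0 : ∀ x e, 0 ≤ T x e := fun x e =>
    Finset.sum_nonneg fun i _ => Real.rpow_nonneg (hQ0 x e i) _
  have hS0 : ∀ e, 0 ≤ S e := fun e =>
    Finset.sum_nonneg fun a _ => Real.rpow_nonneg (hPA a e) _
  have hrest0 : ∀ x a e, 0 ≤ rest x a e := fun x a e =>
    Finset.sum_nonneg fun a' _ => hPA a' e
  -- Step A
  have hA : ∀ x e, T x e ≤ S e + R x e := by
    intro x e
    have step1 : T x e = ∑ i, ∑ a ∈ Finset.univ.filter (fun a => f x a = i),
        PA a e * Q x e i ^ s := by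
      refine Finset.sum_congr rfl fun i _ => ?_
      rw [Real.rpow_add' (hQ0 x e i) (by linarith : (1:ℝ) + s ≠ 0), Real.rpow_one,
        hQdef]
      exact Finset.sum_mul _ _ _
    have step2 : ∀ i, ∀ a ∈ Finset.univ.filter (fun a => f x a = i),
        PA a e * Q x e i ^ s ≤ PA a e * (PA a e ^ s + rest x a e ^ s) := by
      intro i a ha
      have hfa : f x a = i := (Finset.mem_filter.1 ha).2
      have hQsplit : Q x e i = PA a e + rest x a e := by
        have hmem : a ∈ Finset.univ.filter (fun a' => f x a' = i) := ha
        show (∑ a' ∈ Finset.univ.filter (fun a' => f x a' = i), PA a' e) = _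
        rw [← Finset.add_sum_erase _ _ hmem]
        congr 1
        apply Finset.sum_congr _ (fun _ _ => rfl)
        ext a'
        simp [Finset.mem_erase, Finset.mem_filter, hfa, and_comm]
      refine mul_le_mul_of_nonneg_left ?_ (hPA a e)
      rw [hQsplit]
      exact aux_rpow_subadd (hPA a e) (hrest0 x a e) hs.le hs1
    calc T x e = ∑ i, ∑ a ∈ Finset.univ.filter (fun a => f x a = i),
          PA a e * Q x e i ^ s := step1
      _ ≤ ∑ i, ∑ a ∈ Finset.univ.filter (fun a => f x a = i),
          PA a e * (PA a e ^ s + rest x a e ^ s) :=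
        Finset.sum_le_sum fun i _ => Finset.sum_le_sum (step2 i)
      _ = ∑ a, PA a e * (PA a e ^ s + rest x a e ^ s) := by
        rw [Finset.sum_fiberwise_eq_sum_filter Finset.univ Finset.univ (f x)
          (fun a => PA a e * (PA a e ^ s + rest x a e ^ s))]
        simp
      _ = S e + R x e := by
        rw [hSdef, hRdef, ← Finset.sum_add_distrib]
        refine Finset.sum_congr rfl fun a _ => ?_
        rw [Real.rpow_add' (hPA a e) (by linarith : (1:ℝ) + s ≠ 0), Real.rpow_one]
        ring
  -- collision bound
  have hcol : ∀ e a, ∑ x, μ x * rest x a e ≤ 1 / M := by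
    intro e a
    have hrw : ∀ x, μ x * rest x a e =
        ∑ a' ∈ Finset.univ.filter (fun a' => a' ≠ a),
          (if f x a' = f x a then μ x * PA a' e else 0) := by
      intro x
      rw [hrestdef]
      simp only
      rw [← Finset.filter_filter, Finset.sum_filter, Finset.mul_sum]
      exact Finset.sum_congr rfl fun a' _ => by split <;> simp
    calc ∑ x, μ x * rest x a e
        = ∑ a' ∈ Finset.univ.filter (fun a' => a' ≠ a),
            ∑ x, (if f x a' = f x a then μ x * PA a' e else 0) := by
          rw [Finset.sum_congr rfl fun x _ => hrw x]; exact Finset.sum_comm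
      _ = ∑ a' ∈ Finset.univ.filter (fun a' => a' ≠ a),
            PA a' e * ∑ x ∈ Finset.univ.filter (fun x => f x a' = f x a), μ x := by
          refine Finset.sum_congr rfl fun a' _ => ?_
          rw [← Finset.sum_filter, Finset.mul_sum]
          exact Finset.sum_congr rfl fun x _ => by ring
      _ ≤ ∑ a' ∈ Finset.univ.filter (fun a' => a' ≠ a), PA a' e * (1 / M) := by
          refine Finset.sum_le_sum fun a' ha' => ?_
          exact mul_le_mul_of_nonneg_left
            (huniv a' a (Finset.mem_filter.1 ha').2) (hPA a' e)
      _ = (∑ a' ∈ Finset.univ.filter (fun a' => a' ≠ a), PA a' e) * (1 / M) := by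
          rw [Finset.sum_mul]
      _ ≤ 1 * (1 / M) := by
          refine mul_le_mul_of_nonneg_right ?_ (by positivity)
          rw [← hPAsum e]
          exact Finset.sum_le_sum_of_subset_of_nonneg (Finset.filter_subset _ _)
            (fun a' _ _ => hPA a' e)
      _ = 1 / M := one_mul _
  -- Step B : per-e bound
  have hq0 : (0:ℝ) < 1 / (1 + s) := by positivity
  have hq1 : 1 / (1 + s) ≤ 1 := by rw [div_le_one hs0]; linarith
  have hB : ∀ e, (M:ℝ) ^ (s/(1 + s)) * ∑ x, μ x * (T x e) ^ (1/(1 + s)) ≤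
      1 + 1/(1 + s) * ((M:ℝ) ^ s * S e) := by
    intro e
    have hMs0 : (0:ℝ) ≤ (M:ℝ) ^ s := Real.rpow_nonneg hMpos.le s
    have h1 : ∀ x, (M:ℝ) ^ (s/(1 + s)) * (T x e) ^ (1/(1 + s)) =
        ((M:ℝ) ^ s * T x e) ^ (1/(1 + s)) := by
      intro x
      rw [Real.mul_rpow hMs0 (hT0 x e), ← Real.rpow_mul hMpos.le, mul_one_div]
    have hRbound : ∑ x, μ x * R x e ≤ (1/(M:ℝ)) ^ s := by
      have hswap : ∑ x, μ x * R x e = ∑ a, PA a e * ∑ x, μ x * rest x a e ^ s := by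
        simp only [hRdef, Finset.mul_sum]
        rw [Finset.sum_comm]
        exact Finset.sum_congr rfl fun a _ => Finset.sum_congr rfl fun x _ => by ring
      rw [hswap]
      calc ∑ a, PA a e * ∑ x, μ x * rest x a e ^ s
          ≤ ∑ a, PA a e * (1/(M:ℝ)) ^ s := by
            refine Finset.sum_le_sum fun a _ => mul_le_mul_of_nonneg_left ?_ (hPA a e)
            calc ∑ x, μ x * rest x a e ^ s
                ≤ (∑ x, μ x * rest x a e) ^ s :=
                  aux_jensen_rpow Finset.univ μ (fun x => rest x a e)
                    (fun x _ => hμ x) hμsum (fun x _ => hrest0 x a e) hs hs1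
              _ ≤ (1/(M:ℝ)) ^ s := by
                  refine Real.rpow_le_rpow ?_ (hcol e a) hs.le
                  exact Finset.sum_nonneg fun x _ => mul_nonneg (hμ x) (hrest0 x a e)
        _ = (1/(M:ℝ)) ^ s := by rw [← Finset.sum_mul, hPAsum e, one_mul]
    have hsum1 : ∑ x, μ x * ((M:ℝ) ^ s * T x e) ≤ 1 + (M:ℝ) ^ s * S e := by
      have hMinv : (M:ℝ) ^ s * (1/(M:ℝ)) ^ s = 1 := by
        rw [← Real.mul_rpow hMpos.le (by positivity), mul_one_div,
          div_self hMpos.ne', Real.one_rpow]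
      calc ∑ x, μ x * ((M:ℝ) ^ s * T x e)
          ≤ ∑ x, μ x * ((M:ℝ) ^ s * (S e + R x e)) := by
            refine Finset.sum_le_sum fun x _ => mul_le_mul_of_nonneg_left ?_ (hμ x)
            exact mul_le_mul_of_nonneg_left (hA x e) hMs0
        _ = (M:ℝ) ^ s * S e + (M:ℝ) ^ s * ∑ x, μ x * R x e := by
            simp only [mul_add, Finset.sum_add_distrib, Finset.mul_sum]
            rw [← Finset.sum_mul, hμsum]
            congr 1
            · ring
            · exact Finset.sum_congr rfl fun x _ => by ring
        _ ≤ (M:ℝ) ^ s * S e + (M:ℝ) ^ s * (1/(M:ℝ)) ^ s := by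
            exact add_le_add (le_refl _) (mul_le_mul_of_nonneg_left hRbound hMs0)
        _ = 1 + (M:ℝ) ^ s * S e := by rw [hMinv]; ring
    calc (M:ℝ) ^ (s/(1 + s)) * ∑ x, μ x * (T x e) ^ (1/(1 + s))
        = ∑ x, μ x * ((M:ℝ) ^ s * T x e) ^ (1/(1 + s)) := by
          rw [Finset.mul_sum]
          exact Finset.sum_congr rfl fun x _ => by rw [← h1 x]; ring
      _ ≤ (∑ x, μ x * ((M:ℝ) ^ s * T x e)) ^ (1/(1 + s)) :=
          aux_jensen_rpow Finset.univ μ (fun x => (M:ℝ) ^ s * T x e)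
            (fun x _ => hμ x) hμsum (fun x _ => mul_nonneg hMs0 (hT0 x e)) hq0 hq1
      _ ≤ (1 + (M:ℝ) ^ s * S e) ^ (1/(1 + s)) := by
          refine Real.rpow_le_rpow ?_ hsum1 hq0.le
          exact Finset.sum_nonneg fun x _ =>
            mul_nonneg (hμ x) (mul_nonneg hMs0 (hT0 x e))
      _ ≤ 1 + 1/(1 + s) * ((M:ℝ) ^ s * S e) :=
          aux_bernoulli (mul_nonneg hMs0 (hS0 e)) hq0.le hq1
  -- final assembly
  have hswap2 : (M:ℝ) ^ (s/(1 + s)) * (∑ x, μ x * ∑ e, PE e * (T x e) ^ (1/(1 + s))) =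
      ∑ e, PE e * ((M:ℝ) ^ (s/(1 + s)) * ∑ x, μ x * (T x e) ^ (1/(1 + s))) := by
    simp only [Finset.mul_sum]
    rw [Finset.sum_comm]
    refine Finset.sum_congr rfl fun e _ => ?_
    exact Finset.sum_congr rfl fun x _ => by ring
  calc (M : ℝ) ^ (s/(1 + s)) * (∑ x, μ x * ∑ e, PE e * (T x e) ^ (1/(1 + s)))
      = ∑ e, PE e * ((M:ℝ) ^ (s/(1 + s)) * ∑ x, μ x * (T x e) ^ (1/(1 + s))) := hswap2
    _ ≤ ∑ e, PE e * (1 + 1/(1 + s) * ((M:ℝ) ^ s * S e)) :=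
        Finset.sum_le_sum fun e _ => mul_le_mul_of_nonneg_left (hB e) (hPE e)
    _ = 1 + (1/(1 + s)) * (M : ℝ) ^ s * ∑ e, PE e * S e := by
        simp only [mul_add, Finset.sum_add_distrib, mul_one]
        rw [hPEsum, Finset.mul_sum]
        congr 1
        exact Finset.sum_congr rfl fun e _ => by ring
    _ = 1 + (1/(1 + s)) * (M : ℝ) ^ s * ∑ e, PE e * ∑ a, PA a e ^ (1 + s) := rfl
end

section
/- Lower-bound one-shot direct bound: For an ε-almost universal₂ random hash f_X : A → {1,…,M}, any joint distribution P_{AE}, and any s ∈ [0,1], exp(-s C_{1-s}(f_X(A)|E,X)) ≥ 2^{-s} ∑_{(a,e): P_{A|E}(a|e) ≥ ε/M} P_{AE}(a,e) P_{A|E}(a|e)^{-s} M^{-s} + 2^{-s} ∑_{(a,e): P_{A|E}(a|e) < ε/M} P_{AE}(a,e) ε^{-s}. -/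
open Finset

lemma aux_bern {s u : ℝ} (hs : 0 < s) (hs1 : s ≤ 1) (hu : 0 < u) :
    1 - s * (u - 1) ≤ u ^ (-s) := by
  have hz : -1 ≤ u - 1 := by linarith
  have h1 : u ^ s ≤ 1 + s * (u - 1) := by
    have := rpow_one_add_le_one_add_mul_self hz hs.le hs1
    simpa using this
  have hpos : 0 < 1 + s * (u - 1) := by nlinarith
  have hup : 0 < u ^ s := Real.rpow_pos_of_pos hu s
  have h2 : (1 + s * (u - 1))⁻¹ ≤ u ^ (-s) := by
    rw [Real.rpow_neg hu.le]
    exact inv_anti₀ hup h1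
  have h3 : 1 - s * (u - 1) ≤ (1 + s * (u - 1))⁻¹ := by
    rw [← one_div, le_div_iff₀ hpos]
    nlinarith [sq_nonneg (s * (u - 1))]
  linarith

lemma aux_jensen {X : Type*} [Fintype X] (μ : X → ℝ) (hμ : ∀ x, 0 ≤ μ x)
    (hμsum : ∑ x, μ x = 1) (T : X → ℝ) (hT : ∀ x, 0 < T x)
    {s : ℝ} (hs : 0 < s) (hs1 : s ≤ 1) :
    (∑ x, μ x * T x) ^ (-s) ≤ ∑ x, μ x * T x ^ (-s) := by
  set c := ∑ x, μ x * T x with hc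
  have hcpos : 0 < c := by
    have hx : ∃ x : X, 0 < μ x := by
      by_contra h
      push_neg at h
      have : ∀ x : X, μ x = 0 := fun x => le_antisymm (h x) (hμ x)
      simp [this] at hμsum
    obtain ⟨x₀, hx₀⟩ := hx
    have : 0 < μ x₀ * T x₀ := mul_pos hx₀ (hT x₀)
    refine lt_of_lt_of_le this ?_
    exact Finset.single_le_sum (fun x _ => mul_nonneg (hμ x) (hT x).le) (mem_univ x₀)
  have key : ∀ x : X, μ x * (c ^ (-s) - s * c ^ (-s-1) * (T x - c)) ≤ μ x * T x ^ (-s) := by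
    intro x
    refine mul_le_mul_of_nonneg_left ?_ (hμ x)
    have hb := aux_bern hs hs1 (div_pos (hT x) hcpos)
    have he : T x ^ (-s) = c ^ (-s) * (T x / c) ^ (-s) := by
      rw [Real.div_rpow (hT x).le hcpos.le]
      field_simp
    rw [he]
    have : c ^ (-s) * (1 - s * (T x / c - 1)) ≤ c ^ (-s) * (T x / c) ^ (-s) :=
      mul_le_mul_of_nonneg_left hb (Real.rpow_nonneg hcpos.le _)
    refine le_trans (le_of_eq ?_) this
    have hcs : c ^ (-s-1) = c ^ (-s) / c := by
      rw [show -s-1 = -s + (-1) by ring, Real.rpow_add hcpos, Real.rpow_neg_one]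
      ring
    rw [hcs]
    field_simp
  calc c ^ (-s) = ∑ x, μ x * (c ^ (-s) - s * c ^ (-s-1) * (T x - c)) := by
        rw [Finset.sum_congr rfl (fun x _ => by ring :
          ∀ x ∈ univ, μ x * (c ^ (-s) - s * c ^ (-s-1) * (T x - c)) =
            μ x * c ^ (-s) - s * c ^ (-s-1) * (μ x * T x) + s * c ^ (-s-1) * c * μ x)]
        rw [Finset.sum_add_distrib, Finset.sum_sub_distrib, ← Finset.sum_mul,
          ← Finset.mul_sum, ← Finset.mul_sum, hμsum, ← hc]
        ring
    _ ≤ ∑ x, μ x * T x ^ (-s) := Finset.sum_le_sum (fun x _ => key x)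

lemma aux_A {A : Type*} [Fintype A] {M : ℕ} (g : A → Fin M) (P : A → ℝ)
    (hP : ∀ a, 0 ≤ P a) {s : ℝ} (hs : 0 < s) :
    ∑ a, P a * (∑ a' ∈ Finset.univ.filter (fun a' => g a' = g a), P a') ^ (-s) ≤
      ∑ i : Fin M, (∑ a ∈ Finset.univ.filter (fun a => g a = i), P a) ^ (1 - s) := by
  set Q : Fin M → ℝ := fun i => ∑ a ∈ Finset.univ.filter (fun a => g a = i), P a with hQ
  have hQ0 : ∀ i, 0 ≤ Q i := fun i => Finset.sum_nonneg (fun a _ => hP a)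
  have hre : ∑ a, P a * (∑ a' ∈ Finset.univ.filter (fun a' => g a' = g a), P a') ^ (-s)
      = ∑ i : Fin M, Q i * Q i ^ (-s) := by
    rw [← Finset.sum_fiberwise_of_maps_to (fun a _ => Finset.mem_univ (g a))
      (fun a => P a * (Q (g a)) ^ (-s))]
    refine Finset.sum_congr rfl fun i _ => ?_
    rw [show Q i * Q i ^ (-s) = ∑ a ∈ Finset.univ.filter (fun a => g a = i),
        P a * Q i ^ (-s) by rw [← Finset.sum_mul]]
    refine Finset.sum_congr rfl fun a ha => ?_
    rw [(Finset.mem_filter.mp ha).2]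
  rw [hre]
  refine Finset.sum_le_sum fun i _ => ?_
  rcases eq_or_lt_of_le (hQ0 i) with h | h
  · rw [← h, zero_mul]
    exact Real.rpow_nonneg (Finset.sum_nonneg fun a _ => hP a) _
  · rw [show (1 : ℝ) - s = 1 + (-s) by ring, Real.rpow_add h, Real.rpow_one]

lemma aux_B {A X : Type*} [Fintype A] [Fintype X] {M : ℕ} (hM : 0 < M)
    (f : X → A → Fin M) (μ : X → ℝ) (hμ : ∀ x, 0 ≤ μ x) (hμsum : ∑ x, μ x = 1)
    {ε : ℝ} (hε : 0 < ε)
    (huniv : ∀ a₁ a₂ : A, a₁ ≠ a₂ →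
      ∑ x ∈ Finset.univ.filter (fun x => f x a₁ = f x a₂), μ x ≤ ε / M)
    (P : A → ℝ) (hP : ∀ a, 0 ≤ P a) (hPsum : ∑ a, P a = 1)
    {s : ℝ} (hs : 0 < s) (hs1 : s ≤ 1) (a : A) (ha : 0 < P a) :
    (2 * max (P a) (ε / M)) ^ (-s) ≤
      ∑ x, μ x * (∑ a' ∈ Finset.univ.filter (fun a' => f x a' = f x a), P a') ^ (-s) := by
  classical
  set T : X → ℝ := fun x => ∑ a' ∈ Finset.univ.filter (fun a' => f x a' = f x a), P a'
    with hT
  have hTpos : ∀ x, 0 < T x := by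
    intro x
    refine lt_of_lt_of_le ha ?_
    exact Finset.single_le_sum (fun a' _ => hP a')
      (Finset.mem_filter.mpr ⟨Finset.mem_univ a, rfl⟩)
  have hET : ∑ x, μ x * T x ≤ P a + ε / M := by
    have h1 : ∑ x, μ x * T x
        = ∑ a' : A, P a' * ∑ x ∈ Finset.univ.filter (fun x => f x a' = f x a), μ x := by
      simp_rw [hT, Finset.mul_sum, Finset.sum_filter]
      rw [Finset.sum_comm]
      exact Finset.sum_congr rfl fun a' _ => Finset.sum_congr rfl fun x _ => by
        split <;> ring
    rw [h1, ← Finset.add_sum_erase _ _ (Finset.mem_univ a)]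
    have h2 : P a * ∑ x ∈ Finset.univ.filter (fun x => f x a = f x a), μ x = P a := by
      simp [hμsum]
    rw [h2]
    have h3 : ∑ a' ∈ Finset.univ.erase a,
        P a' * ∑ x ∈ Finset.univ.filter (fun x => f x a' = f x a), μ x ≤
        ∑ a' ∈ Finset.univ.erase a, P a' * (ε / M) := by
      refine Finset.sum_le_sum fun a' ha' => ?_
      exact mul_le_mul_of_nonneg_left
        (huniv a' a (Finset.ne_of_mem_erase ha')) (hP a')
    have h4 : ∑ a' ∈ Finset.univ.erase a, P a' * (ε / M) ≤ ε / M := by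
      rw [← Finset.sum_mul]
      have h5 : ∑ a' ∈ Finset.univ.erase a, P a' ≤ 1 := by
        rw [← hPsum]
        exact Finset.sum_le_sum_of_subset_of_nonneg (Finset.erase_subset _ _)
          (fun a' _ _ => hP a')
      have h6 : 0 ≤ ε / M := by positivity
      nlinarith
    linarith
  have hmax : ∑ x, μ x * T x ≤ 2 * max (P a) (ε / M) := by
    have := le_max_left (P a) (ε / M)
    have := le_max_right (P a) (ε / M)
    linarith
  have hETpos : 0 < ∑ x, μ x * T x := by
    have := aux_jensen μ hμ hμsum T hTpos hs hs1
    -- positivity of the expectation: reuse argument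
    by_contra h
    push_neg at h
    have : ∀ x : X, μ x = 0 ∨ T x ≤ 0 := by
      intro x
      by_contra hx
      push_neg at hx
      have hx1 : 0 < μ x := lt_of_le_of_ne (hμ x) (Ne.symm hx.1)
      have : 0 < ∑ x, μ x * T x := by
        refine lt_of_lt_of_le (mul_pos hx1 (hTpos x)) ?_
        exact Finset.single_le_sum (fun y _ => mul_nonneg (hμ y) (hTpos y).le)
          (Finset.mem_univ x)
      linarith
    have hz : ∀ x : X, μ x = 0 := by
      intro x
      rcases this x with h' | h'
      · exact h'
      · exact absurd h' (not_le.mpr (hTpos x))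
    simp [hz] at hμsum
  calc (2 * max (P a) (ε / M)) ^ (-s) ≤ (∑ x, μ x * T x) ^ (-s) :=
        Real.rpow_le_rpow_of_nonpos hETpos hmax (neg_nonpos.mpr hs.le)
    _ ≤ ∑ x, μ x * T x ^ (-s) := aux_jensen μ hμ hμsum T hTpos hs hs1
/-- Lower-bound one-shot direct bound: for an `ε`-almost universal₂ random hash
`f_X` into `{1,…,M}` and `s ∈ (0,1]`,
`exp(-s C_{1-s}(f_X(A)|E,X)) ≥ 2^{-s} ∑_{P_{A|E}(a|e) ≥ ε/M} P_{AE}(a,e) P_{A|E}(a|e)^{-s} M^{-s}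
 + 2^{-s} ∑_{P_{A|E}(a|e) < ε/M} P_{AE}(a,e) ε^{-s}`. -/
theorem one_shot_direct_lower_bound {A E X : Type*} [Fintype A] [Fintype E] [Fintype X]
    (M : ℕ) (hM : 0 < M) (f : X → A → Fin M)
    (μ : X → ℝ) (hμ : ∀ x, 0 ≤ μ x) (hμsum : ∑ x, μ x = 1)
    (ε : ℝ) (hε : 0 < ε)
    (huniv : ∀ a₁ a₂ : A, a₁ ≠ a₂ →
      ∑ x ∈ Finset.univ.filter (fun x => f x a₁ = f x a₂), μ x ≤ ε / M)
    (PE : E → ℝ) (hPE : ∀ e, 0 ≤ PE e) (hPEsum : ∑ e, PE e = 1)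
    (PA : A → E → ℝ) (hPA : ∀ a e, 0 ≤ PA a e) (hPAsum : ∀ e, ∑ a, PA a e = 1)
    (s : ℝ) (hs : 0 < s) (hs1 : s ≤ 1) :
    (2 : ℝ) ^ (-s) * (∑ e, PE e *
        ∑ a ∈ Finset.univ.filter (fun a => ε / M ≤ PA a e),
          PA a e * (PA a e ^ (-s) * (M : ℝ) ^ (-s))) +
      (2 : ℝ) ^ (-s) * (∑ e, PE e *
        ∑ a ∈ Finset.univ.filter (fun a => PA a e < ε / M),
          PA a e * ε ^ (-s)) ≤
    (M : ℝ) ^ (-s) * (∑ x, μ x * ∑ e, PE e * ∑ i : Fin M,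
        (∑ a ∈ Finset.univ.filter (fun a => f x a = i), PA a e) ^ (1 - s)) := by
  have hMpos : (0 : ℝ) < (M : ℝ) := by exact_mod_cast hM
  have hεM : 0 < ε / M := div_pos hε hMpos
  set mid := ∑ e, PE e * ∑ a, PA a e * (2 * max (PA a e) (ε / M)) ^ (-s) with hmid
  have step2 : mid ≤ ∑ x, μ x * ∑ e, PE e * ∑ i : Fin M,
      (∑ a ∈ Finset.univ.filter (fun a => f x a = i), PA a e) ^ (1 - s) := by
    have stepB : mid ≤ ∑ e, PE e * ∑ a, PA a e *
        ∑ x, μ x * (∑ a' ∈ Finset.univ.filter (fun a' => f x a' = f x a), PA a' e) ^ (-s) := by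
      refine Finset.sum_le_sum fun e _ =>
        mul_le_mul_of_nonneg_left (Finset.sum_le_sum fun a _ => ?_) (hPE e)
      rcases eq_or_lt_of_le (hPA a e) with h | h
      · rw [← h, zero_mul, zero_mul]
      · exact mul_le_mul_of_nonneg_left
          (aux_B hM f μ hμ hμsum hε huniv (fun a' => PA a' e)
            (fun a' => hPA a' e) (hPAsum e) hs hs1 a h) (hPA a e)
    have swap : ∑ e, PE e * ∑ a, PA a e *
        ∑ x, μ x * (∑ a' ∈ Finset.univ.filter (fun a' => f x a' = f x a), PA a' e) ^ (-s)
        = ∑ x, μ x * ∑ e, PE e * ∑ a, PA a e *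
          (∑ a' ∈ Finset.univ.filter (fun a' => f x a' = f x a), PA a' e) ^ (-s) := by
      simp_rw [Finset.mul_sum]
      conv_rhs => rw [Finset.sum_comm]
      refine Finset.sum_congr rfl fun e _ => ?_
      rw [Finset.sum_comm]
      exact Finset.sum_congr rfl fun x _ => Finset.sum_congr rfl fun a _ => by ring
    have stepA : ∑ x, μ x * ∑ e, PE e * ∑ a, PA a e *
          (∑ a' ∈ Finset.univ.filter (fun a' => f x a' = f x a), PA a' e) ^ (-s)
        ≤ ∑ x, μ x * ∑ e, PE e * ∑ i : Fin M,
          (∑ a ∈ Finset.univ.filter (fun a => f x a = i), PA a e) ^ (1 - s) := by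
      refine Finset.sum_le_sum fun x _ => mul_le_mul_of_nonneg_left
        (Finset.sum_le_sum fun e _ => mul_le_mul_of_nonneg_left ?_ (hPE e)) (hμ x)
      exact aux_A (f x) (fun a => PA a e) (fun a => hPA a e) hs
    calc mid ≤ _ := stepB
      _ = _ := swap
      _ ≤ _ := stepA
  have step1 : (2 : ℝ) ^ (-s) * (∑ e, PE e *
        ∑ a ∈ Finset.univ.filter (fun a => ε / M ≤ PA a e),
          PA a e * (PA a e ^ (-s) * (M : ℝ) ^ (-s))) +
      (2 : ℝ) ^ (-s) * (∑ e, PE e *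
        ∑ a ∈ Finset.univ.filter (fun a => PA a e < ε / M),
          PA a e * ε ^ (-s)) = (M : ℝ) ^ (-s) * mid := by
    rw [hmid, Finset.mul_sum, Finset.mul_sum, Finset.mul_sum, ← Finset.sum_add_distrib]
    refine Finset.sum_congr rfl fun e _ => ?_
    have hMne : (M : ℝ) ^ (-s) ≠ 0 := (Real.rpow_pos_of_pos hMpos _).ne'
    have hsplit : (∑ a, PA a e * (2 * max (PA a e) (ε / M)) ^ (-s))
        = (∑ a ∈ Finset.univ.filter (fun a => ε / M ≤ PA a e),
            PA a e * (2 * max (PA a e) (ε / M)) ^ (-s))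
          + ∑ a ∈ Finset.univ.filter (fun a => PA a e < ε / M),
            PA a e * (2 * max (PA a e) (ε / M)) ^ (-s) := by
      rw [← Finset.sum_filter_add_sum_filter_not Finset.univ (fun a => ε / M ≤ PA a e)]
      congr 1
      exact Finset.sum_congr (Finset.filter_congr fun a _ => by simp [not_le]) fun a _ => rfl
    have E1 : (M : ℝ) ^ (-s) * ∑ a ∈ Finset.univ.filter (fun a => ε / M ≤ PA a e),
          PA a e * (2 * max (PA a e) (ε / M)) ^ (-s)
        = 2 ^ (-s) * ∑ a ∈ Finset.univ.filter (fun a => ε / M ≤ PA a e),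
          PA a e * (PA a e ^ (-s) * (M : ℝ) ^ (-s)) := by
      rw [Finset.mul_sum, Finset.mul_sum]
      refine Finset.sum_congr rfl fun a ha => ?_
      have h := (Finset.mem_filter.mp ha).2
      rw [max_eq_left h, Real.mul_rpow (by norm_num) (le_trans hεM.le h)]
      ring
    have E2 : (M : ℝ) ^ (-s) * ∑ a ∈ Finset.univ.filter (fun a => PA a e < ε / M),
          PA a e * (2 * max (PA a e) (ε / M)) ^ (-s)
        = 2 ^ (-s) * ∑ a ∈ Finset.univ.filter (fun a => PA a e < ε / M),
          PA a e * ε ^ (-s) := by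
      rw [Finset.mul_sum, Finset.mul_sum]
      refine Finset.sum_congr rfl fun a ha => ?_
      have h := (Finset.mem_filter.mp ha).2
      rw [max_eq_right h.le, Real.mul_rpow (by norm_num) hεM.le,
        Real.div_rpow hε.le hMpos.le]
      field_simp
    rw [hsplit]
    linear_combination (-(PE e)) * E1 - (PE e) * E2
  rw [step1]
  exact mul_le_mul_of_nonneg_left step2 (Real.rpow_nonneg hMpos.le _)
end

section
/- Second-order direct one-shot bound: For an ε-almost universal₂ random hash f_X : A → {1,…,M}, any s ∈ [0,1], and any c > 0, exp(-s C_{1-s}(f_X(A)|E,X)) ≥ P_{AE}{(a,e): P_{A|E}(a|e) ≤ c/M} · (1/(c+ε))^s. -/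
open Finset

/-- Tangent-line (Bernoulli-type) bound: for `0 < s ≤ 1` and `u > 0`,
`1 + s * (1 - u) ≤ u ^ (-s)`. -/
lemma bern_aux {s u : ℝ} (hs : 0 < s) (hs1 : s ≤ 1) (hu : 0 < u) :
    1 + s * (1 - u) ≤ u ^ (-s) := by
  have h1 : u ^ s ≤ 1 + s * (u - 1) := by
    have h := rpow_one_add_le_one_add_mul_self (s := u - 1) (by linarith) hs.le hs1
    simpa using h
  have hpos : (0:ℝ) < u ^ s := Real.rpow_pos_of_pos hu s
  have h2 : (0:ℝ) < 1 + s * (u - 1) := lt_of_lt_of_le hpos h1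
  rw [Real.rpow_neg hu.le s]
  have h4 : (1 + s * (u - 1))⁻¹ ≤ (u ^ s)⁻¹ := by
    apply inv_anti₀ hpos h1
  have h5 : 1 + s * (1 - u) ≤ (1 + s * (u - 1))⁻¹ := by
    rw [inv_eq_one_div, le_div_iff₀ h2]
    nlinarith [sq_nonneg (s * (u - 1))]
  linarith

/-- Second-order direct one-shot bound: for an `ε`-almost universal₂ random hash
`f_X` into `{1,…,M}`, `s ∈ (0,1]` and `c > 0`,
`exp(-s C_{1-s}(f_X(A)|E,X)) ≥ P_{AE}{(a,e): P_{A|E}(a|e) ≤ c/M} · (1/(c+ε))^s`. -/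
theorem second_order_direct_one_shot {A E X : Type*} [Fintype A] [Fintype E] [Fintype X]
    (M : ℕ) (hM : 0 < M) (f : X → A → Fin M)
    (μ : X → ℝ) (hμ : ∀ x, 0 ≤ μ x) (hμsum : ∑ x, μ x = 1)
    (ε : ℝ) (hε : 0 < ε)
    (huniv : ∀ a₁ a₂ : A, a₁ ≠ a₂ →
      ∑ x ∈ Finset.univ.filter (fun x => f x a₁ = f x a₂), μ x ≤ ε / M)
    (PE : E → ℝ) (hPE : ∀ e, 0 ≤ PE e) (hPEsum : ∑ e, PE e = 1)
    (PA : A → E → ℝ) (hPA : ∀ a e, 0 ≤ PA a e) (hPAsum : ∀ e, ∑ a, PA a e = 1)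
    (s : ℝ) (hs : 0 < s) (hs1 : s ≤ 1) (c : ℝ) (hc : 0 < c) :
    (∑ e, PE e * ∑ a ∈ Finset.univ.filter (fun a => PA a e ≤ c / M), PA a e) *
        (1/(c + ε)) ^ s ≤
      (M : ℝ) ^ (-s) * (∑ x, μ x * ∑ e, PE e * ∑ i : Fin M,
        (∑ a ∈ Finset.univ.filter (fun a => f x a = i), PA a e) ^ (1 - s)) := by
  classical
  have hMpos : (0:ℝ) < M := Nat.cast_pos.mpr hM
  set b : ℝ := (c + ε) / M with hb_def
  have hb : 0 < b := div_pos (by linarith) hMpos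
  set S : X → E → Fin M → ℝ :=
    fun x e i => ∑ a ∈ Finset.univ.filter (fun a => f x a = i), PA a e with hS_def
  have hSnn : ∀ x e i, 0 ≤ S x e i := fun x e i => Finset.sum_nonneg fun a _ => hPA a e
  set G : E → Finset A := fun e => Finset.univ.filter (fun a => PA a e ≤ c / M) with hG_def
  -- Step A: per (x,e), bin-sum lower bound
  have stepA : ∀ x e, ∑ a ∈ G e, PA a e * (S x e (f x a)) ^ (-s)
      ≤ ∑ i : Fin M, (S x e i) ^ (1 - s) := by
    intro x e
    rw [← Finset.sum_fiberwise (G e) (fun a => f x a)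
      (fun a => PA a e * (S x e (f x a)) ^ (-s))]
    apply Finset.sum_le_sum
    intro i _
    have hrw : ∑ a ∈ (G e).filter (fun a => f x a = i), PA a e * (S x e (f x a)) ^ (-s)
        = (∑ a ∈ (G e).filter (fun a => f x a = i), PA a e) * (S x e i) ^ (-s) := by
      rw [Finset.sum_mul]
      apply Finset.sum_congr rfl
      intro a ha
      rw [Finset.mem_filter] at ha
      rw [ha.2]
    rw [hrw]
    have hsub : (G e).filter (fun a => f x a = i) ⊆ Finset.univ.filter (fun a => f x a = i) := by
      intro a ha
      rw [Finset.mem_filter] at ha ⊢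
      exact ⟨Finset.mem_univ a, ha.2⟩
    have hle : (∑ a ∈ (G e).filter (fun a => f x a = i), PA a e) ≤ S x e i :=
      Finset.sum_le_sum_of_subset_of_nonneg hsub (fun a _ _ => hPA a e)
    rcases eq_or_lt_of_le (hSnn x e i) with h0 | hpos
    · have hzero : (∑ a ∈ (G e).filter (fun a => f x a = i), PA a e) = 0 := by
        have hnn : 0 ≤ ∑ a ∈ (G e).filter (fun a => f x a = i), PA a e :=
          Finset.sum_nonneg fun a _ => hPA a e
        linarith [hle, h0.symm ▸ hle]
      rw [hzero, zero_mul]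
      exact Real.rpow_nonneg (hSnn x e i) _
    · calc (∑ a ∈ (G e).filter (fun a => f x a = i), PA a e) * (S x e i) ^ (-s)
          ≤ S x e i * (S x e i) ^ (-s) :=
            mul_le_mul_of_nonneg_right hle (Real.rpow_nonneg (hSnn x e i) _)
        _ = (S x e i) ^ (1 - s) := by
            rw [show (1:ℝ) - s = 1 + (-s) by ring, Real.rpow_add hpos, Real.rpow_one]
  -- Step D: expected bin mass bound for good a
  have stepD : ∀ e, ∀ a ∈ G e, ∑ x, μ x * S x e (f x a) ≤ b := by
    intro e a ha
    rw [hG_def, Finset.mem_filter] at ha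
    have expand : ∀ x, S x e (f x a) = ∑ a' : A, if f x a' = f x a then PA a' e else 0 := by
      intro x
      simp only [hS_def]
      rw [Finset.sum_filter]
    have step1 : ∑ x, μ x * S x e (f x a)
        = ∑ a' : A, PA a' e * ∑ x ∈ Finset.univ.filter (fun x => f x a' = f x a), μ x := by
      calc ∑ x, μ x * S x e (f x a)
          = ∑ x, ∑ a' : A, (if f x a' = f x a then μ x * PA a' e else 0) := by
            apply Finset.sum_congr rfl
            intro x _
            rw [expand x, Finset.mul_sum]
            apply Finset.sum_congr rfl
            intro a' _
            split <;> simp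
        _ = ∑ a' : A, ∑ x, (if f x a' = f x a then μ x * PA a' e else 0) := Finset.sum_comm
        _ = ∑ a' : A, PA a' e * ∑ x ∈ Finset.univ.filter (fun x => f x a' = f x a), μ x := by
            apply Finset.sum_congr rfl
            intro a' _
            rw [← Finset.sum_filter, Finset.mul_sum]
            apply Finset.sum_congr rfl
            intro x _
            ring
    rw [step1]
    have hsplit : ∑ a' : A, PA a' e * ∑ x ∈ Finset.univ.filter (fun x => f x a' = f x a), μ x
        = PA a e * (∑ x ∈ Finset.univ.filter (fun x => f x a = f x a), μ x)
          + ∑ a' ∈ Finset.univ.erase a,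
              PA a' e * ∑ x ∈ Finset.univ.filter (fun x => f x a' = f x a), μ x :=
      (Finset.add_sum_erase Finset.univ
        (fun a' => PA a' e * ∑ x ∈ Finset.univ.filter (fun x => f x a' = f x a), μ x)
        (Finset.mem_univ a)).symm
    have hterm_a : PA a e * ∑ x ∈ Finset.univ.filter (fun x => f x a = f x a), μ x ≤ c / M := by
      have : Finset.univ.filter (fun x : X => f x a = f x a) = Finset.univ := by
        apply Finset.filter_true_of_mem
        intro x _
        rfl
      rw [this, hμsum, mul_one]
      exact ha.2
    have hterm_rest : ∑ a' ∈ Finset.univ.erase a,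
        PA a' e * ∑ x ∈ Finset.univ.filter (fun x => f x a' = f x a), μ x ≤ ε / M := by
      calc ∑ a' ∈ Finset.univ.erase a,
            PA a' e * ∑ x ∈ Finset.univ.filter (fun x => f x a' = f x a), μ x
          ≤ ∑ a' ∈ Finset.univ.erase a, PA a' e * (ε / M) := by
            apply Finset.sum_le_sum
            intro a' ha'
            have hne : a' ≠ a := Finset.ne_of_mem_erase ha'
            exact mul_le_mul_of_nonneg_left (huniv a' a hne) (hPA a' e)
        _ = (∑ a' ∈ Finset.univ.erase a, PA a' e) * (ε / M) := by rw [← Finset.sum_mul]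
        _ ≤ 1 * (ε / M) := by
            apply mul_le_mul_of_nonneg_right _ (by positivity)
            rw [← hPAsum e]
            exact Finset.sum_le_sum_of_subset_of_nonneg (Finset.erase_subset a _)
              (fun a'' _ _ => hPA a'' e)
        _ = ε / M := one_mul _
    have hcb : c / M + ε / M = b := by
      rw [hb_def]; ring
    rw [hsplit, ← hcb]
    exact add_le_add hterm_a hterm_rest
  -- Step C: per (e, a ∈ G e), averaged lower bound via Bernoulli
  have stepC : ∀ e, ∀ a ∈ G e,
      PA a e * b ^ (-s) ≤ ∑ x, μ x * (PA a e * (S x e (f x a)) ^ (-s)) := by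
    intro e a ha
    rcases eq_or_lt_of_le (hPA a e) with h0 | hpos
    · rw [← h0]
      simp
    · have hT : ∀ x, 0 < S x e (f x a) := by
        intro x
        have hmem : a ∈ Finset.univ.filter (fun a' => f x a' = f x a) := by
          rw [Finset.mem_filter]; exact ⟨Finset.mem_univ a, rfl⟩
        have := Finset.single_le_sum (f := fun a' => PA a' e) (fun a' _ => hPA a' e) hmem
        calc (0:ℝ) < PA a e := hpos
          _ ≤ S x e (f x a) := this
      have key : ∀ x, b ^ (-s) * (1 + s * (1 - S x e (f x a) / b)) ≤ (S x e (f x a)) ^ (-s) := by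
        intro x
        have hu : 0 < S x e (f x a) / b := div_pos (hT x) hb
        have hbern := bern_aux hs hs1 hu
        have heq : (S x e (f x a)) ^ (-s) = b ^ (-s) * (S x e (f x a) / b) ^ (-s) := by
          rw [Real.div_rpow (hT x).le hb.le]
          field_simp
        rw [heq]
        exact mul_le_mul_of_nonneg_left hbern (Real.rpow_nonneg hb.le _)
      have havg : b ^ (-s) ≤ ∑ x, μ x * (S x e (f x a)) ^ (-s) := by
        have h1 : ∑ x, μ x * (b ^ (-s) * (1 + s * (1 - S x e (f x a) / b)))
            ≤ ∑ x, μ x * (S x e (f x a)) ^ (-s) :=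
          Finset.sum_le_sum fun x _ => mul_le_mul_of_nonneg_left (key x) (hμ x)
        have h2 : ∑ x, μ x * (b ^ (-s) * (1 + s * (1 - S x e (f x a) / b)))
            = b ^ (-s) * ((1 + s) * (∑ x, μ x) - (s / b) * (∑ x, μ x * S x e (f x a))) := by
          rw [Finset.mul_sum, mul_sub, Finset.mul_sum, Finset.mul_sum, Finset.mul_sum,
            ← Finset.sum_sub_distrib]
          apply Finset.sum_congr rfl
          intro x _
          field_simp
          ring
        have h3 : (s / b) * (∑ x, μ x * S x e (f x a)) ≤ s := by
          have := stepD e a ha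
          calc (s / b) * (∑ x, μ x * S x e (f x a)) ≤ (s / b) * b :=
                mul_le_mul_of_nonneg_left this (by positivity)
            _ = s := by field_simp
        have h4 : b ^ (-s) * 1 ≤ b ^ (-s) * ((1 + s) * (∑ x, μ x)
            - (s / b) * (∑ x, μ x * S x e (f x a))) := by
          apply mul_le_mul_of_nonneg_left _ (Real.rpow_nonneg hb.le _)
          rw [hμsum]
          linarith
        rw [mul_one] at h4
        linarith
      calc PA a e * b ^ (-s) ≤ PA a e * ∑ x, μ x * (S x e (f x a)) ^ (-s) :=
            mul_le_mul_of_nonneg_left havg hpos.le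
        _ = ∑ x, μ x * (PA a e * (S x e (f x a)) ^ (-s)) := by
            rw [Finset.mul_sum]
            apply Finset.sum_congr rfl
            intro x _
            ring
  -- Step B: assemble
  have stepB : (∑ e, PE e * ∑ a ∈ G e, PA a e) * b ^ (-s)
      ≤ ∑ x, μ x * ∑ e, PE e * ∑ i : Fin M, (S x e i) ^ (1 - s) := by
    have per_e : ∀ e, (∑ a ∈ G e, PA a e) * b ^ (-s)
        ≤ ∑ x, μ x * ∑ a ∈ G e, PA a e * (S x e (f x a)) ^ (-s) := by
      intro e
      calc (∑ a ∈ G e, PA a e) * b ^ (-s) = ∑ a ∈ G e, PA a e * b ^ (-s) := Finset.sum_mul ..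
        _ ≤ ∑ a ∈ G e, ∑ x, μ x * (PA a e * (S x e (f x a)) ^ (-s)) :=
            Finset.sum_le_sum fun a ha => stepC e a ha
        _ = ∑ x, ∑ a ∈ G e, μ x * (PA a e * (S x e (f x a)) ^ (-s)) := Finset.sum_comm
        _ = ∑ x, μ x * ∑ a ∈ G e, PA a e * (S x e (f x a)) ^ (-s) := by
            apply Finset.sum_congr rfl
            intro x _
            rw [Finset.mul_sum]
    calc (∑ e, PE e * ∑ a ∈ G e, PA a e) * b ^ (-s)
        = ∑ e, PE e * ((∑ a ∈ G e, PA a e) * b ^ (-s)) := by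
          rw [Finset.sum_mul]
          apply Finset.sum_congr rfl
          intro e _
          ring
      _ ≤ ∑ e, PE e * ∑ x, μ x * ∑ a ∈ G e, PA a e * (S x e (f x a)) ^ (-s) :=
          Finset.sum_le_sum fun e _ => mul_le_mul_of_nonneg_left (per_e e) (hPE e)
      _ ≤ ∑ e, PE e * ∑ x, μ x * ∑ i : Fin M, (S x e i) ^ (1 - s) := by
          apply Finset.sum_le_sum
          intro e _
          apply mul_le_mul_of_nonneg_left _ (hPE e)
          exact Finset.sum_le_sum fun x _ => mul_le_mul_of_nonneg_left (stepA x e) (hμ x)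
      _ = ∑ x, μ x * ∑ e, PE e * ∑ i : Fin M, (S x e i) ^ (1 - s) := by
          simp_rw [Finset.mul_sum]
          rw [Finset.sum_comm]
          apply Finset.sum_congr rfl
          intro x _
          apply Finset.sum_congr rfl
          intro e _
          apply Finset.sum_congr rfl
          intro i _
          ring
  -- Final algebra
  have hQnn : 0 ≤ ∑ e, PE e * ∑ a ∈ G e, PA a e :=
    Finset.sum_nonneg fun e _ => mul_nonneg (hPE e)
      (Finset.sum_nonneg fun a _ => hPA a e)
  have hpow : (1/(c + ε)) ^ s = (M:ℝ) ^ (-s) * b ^ (-s) := by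
    have hcε : (0:ℝ) < c + ε := by linarith
    have h1 : ((M:ℝ))^s ≠ 0 := (Real.rpow_pos_of_pos hMpos s).ne'
    have h2 : ((c + ε):ℝ)^s ≠ 0 := (Real.rpow_pos_of_pos hcε s).ne'
    rw [hb_def, one_div, Real.inv_rpow hcε.le, Real.rpow_neg hMpos.le,
      Real.rpow_neg (div_pos hcε hMpos).le, Real.div_rpow hcε.le hMpos.le]
    field_simp
  rw [hpow]
  have hM0 : (0:ℝ) ≤ (M:ℝ) ^ (-s) := Real.rpow_nonneg hMpos.le _
  calc (∑ e, PE e * ∑ a ∈ G e, PA a e) * ((M:ℝ) ^ (-s) * b ^ (-s))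
      = (M:ℝ) ^ (-s) * ((∑ e, PE e * ∑ a ∈ G e, PA a e) * b ^ (-s)) := by ring
    _ ≤ (M:ℝ) ^ (-s) * (∑ x, μ x * ∑ e, PE e * ∑ i : Fin M, (S x e i) ^ (1 - s)) :=
        mul_le_mul_of_nonneg_left stepB hM0
end

section
/- Data-processing converse one-shot bound: Fix c > 1 and s ∈ (0,1). Any function f : A → {1,…,M} satisfies exp(-s C_{1-s}(f(A)|E|P_{AE})) ≤ ∑_{(a,e): P_{A|E}(a|e) ≥ c/M} P_E(e) P_{A|E}(a|e)^{1-s} M^{-s} + ∑_e P_E(e) · (P_{A|E=e}{a : P_{A|E}(a|e) < c/M})^{1-s}, and consequently exp(-s C_{1-s}(f(A)|E|P_{AE})) ≤ c^{-s} P_{AE}{(a,e): P_{A|E}(a|e) ≥ c/M} + (P_{AE}{(a,e): P_{A|E}(a|e) < c/M})^{1-s}. -/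
open Finset

lemma my_rpow_two_subadd {x y p : ℝ} (hx : 0 ≤ x) (hy : 0 ≤ y) (hp : 0 ≤ p) (hp1 : p ≤ 1) :
    (x + y) ^ p ≤ x ^ p + y ^ p := by
  lift x to NNReal using hx
  lift y to NNReal using hy
  have := NNReal.rpow_add_le_add_rpow x y hp hp1
  exact_mod_cast this

lemma my_sum_rpow_subadd {ι : Type*} (s : Finset ι) (x : ι → ℝ) (hx : ∀ i ∈ s, 0 ≤ x i)
    {p : ℝ} (hp : 0 < p) (hp1 : p ≤ 1) :
    (∑ i ∈ s, x i) ^ p ≤ ∑ i ∈ s, x i ^ p := by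
  classical
  induction s using Finset.induction with
  | empty => simp [Real.zero_rpow hp.ne']
  | insert _ _ ha ih =>
    rename_i a t
    rw [Finset.sum_insert ha, Finset.sum_insert ha]
    have h1 : (x a + ∑ i ∈ t, x i) ^ p ≤ x a ^ p + (∑ i ∈ t, x i) ^ p :=
      my_rpow_two_subadd (hx a (mem_insert_self a t))
        (Finset.sum_nonneg fun i hi => hx i (mem_insert_of_mem hi)) hp.le hp1
    exact h1.trans (by gcongr; exact ih fun i hi => hx i (mem_insert_of_mem hi))

lemma my_jensen_rpow {ι : Type*} (s : Finset ι) (w z : ι → ℝ) (hw : ∀ i ∈ s, 0 ≤ w i)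
    (hw' : ∑ i ∈ s, w i = 1) (hz : ∀ i ∈ s, 0 ≤ z i) {p : ℝ} (hp : 0 < p) (hp1 : p ≤ 1) :
    ∑ i ∈ s, w i * z i ^ p ≤ (∑ i ∈ s, w i * z i) ^ p := by
  have hq : (1 : ℝ) ≤ 1 / p := by rw [le_div_iff₀ hp]; simpa using hp1
  have h := Real.arith_mean_le_rpow_mean s w (fun i => z i ^ p) hw hw'
    (fun i hi => Real.rpow_nonneg (hz i hi) p) hq
  simp only [one_div_one_div] at h
  calc ∑ i ∈ s, w i * z i ^ p
      ≤ (∑ i ∈ s, w i * (z i ^ p) ^ (1 / p)) ^ p := h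
    _ = (∑ i ∈ s, w i * z i) ^ p := by
        congr 1
        refine Finset.sum_congr rfl fun i hi => ?_
        rw [← Real.rpow_mul (hz i hi), mul_one_div, div_self hp.ne', Real.rpow_one]

/-- Data-processing converse one-shot bound: for `c > 1`, `s ∈ (0,1)` and any
function `f : A → {1,…,M}`, two upper bounds on `exp(-s C_{1-s}(f(A)|E|P_{AE}))`. -/
theorem data_processing_converse_one_shot {A E : Type*} [Fintype A] [Fintype E]
    (M : ℕ) (hM : 0 < M) (f : A → Fin M)
    (PE : E → ℝ) (hPE : ∀ e, 0 ≤ PE e) (hPEsum : ∑ e, PE e = 1)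
    (PA : A → E → ℝ) (hPA : ∀ a e, 0 ≤ PA a e) (hPAsum : ∀ e, ∑ a, PA a e = 1)
    (s : ℝ) (hs : 0 < s) (hs1 : s < 1) (c : ℝ) (hc : 1 < c) :
    ((M : ℝ) ^ (-s) * (∑ e, PE e * ∑ m : Fin M,
        (∑ a ∈ Finset.univ.filter (fun a => f a = m), PA a e) ^ (1 - s)) ≤
      (∑ e, PE e *
          ∑ a ∈ Finset.univ.filter (fun a => c / M ≤ PA a e),
            PA a e ^ (1 - s) * (M : ℝ) ^ (-s)) +
        ∑ e, PE e *
          (∑ a ∈ Finset.univ.filter (fun a => PA a e < c / M), PA a e) ^ (1 - s))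
    ∧
    ((M : ℝ) ^ (-s) * (∑ e, PE e * ∑ m : Fin M,
        (∑ a ∈ Finset.univ.filter (fun a => f a = m), PA a e) ^ (1 - s)) ≤
      c ^ (-s) *
          (∑ e, PE e * ∑ a ∈ Finset.univ.filter (fun a => c / M ≤ PA a e), PA a e) +
        (∑ e, PE e *
          ∑ a ∈ Finset.univ.filter (fun a => PA a e < c / M), PA a e) ^ (1 - s)) := by
  classical
  have hp0 : (0 : ℝ) < 1 - s := by linarith
  have hp1 : (1 : ℝ) - s ≤ 1 := by linarith
  have hM0 : (0 : ℝ) < M := by exact_mod_cast hM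
  have hMs : (0 : ℝ) < (M : ℝ) ^ (-s) := Real.rpow_pos_of_pos hM0 _
  have hc0 : (0 : ℝ) < c := lt_trans one_pos hc
  -- per-e key inequality
  have key : ∀ e : E,
      (M : ℝ) ^ (-s) * ∑ m : Fin M,
          (∑ a ∈ Finset.univ.filter (fun a => f a = m), PA a e) ^ (1 - s) ≤
      (∑ a ∈ Finset.univ.filter (fun a => c / M ≤ PA a e),
          PA a e ^ (1 - s) * (M : ℝ) ^ (-s)) +
      (∑ a ∈ Finset.univ.filter (fun a => PA a e < c / M), PA a e) ^ (1 - s) := by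
    intro e
    set Hs : Finset A := Finset.univ.filter (fun a => c / M ≤ PA a e) with hHs
    set Ls : Finset A := Finset.univ.filter (fun a => PA a e < c / M) with hLs
    -- per-m split
    have hsplit : ∀ m : Fin M,
        (∑ a ∈ Finset.univ.filter (fun a => f a = m), PA a e) ^ (1 - s) ≤
        (∑ a ∈ Hs.filter (fun a => f a = m), PA a e ^ (1 - s))
        + (∑ a ∈ Ls.filter (fun a => f a = m), PA a e) ^ (1 - s) := by
      intro m
      have hQ : ∑ a ∈ Finset.univ.filter (fun a => f a = m), PA a e
          = (∑ a ∈ Hs.filter (fun a => f a = m), PA a e)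
            + (∑ a ∈ Ls.filter (fun a => f a = m), PA a e) := by
        rw [← Finset.sum_filter_add_sum_filter_not
          (Finset.univ.filter (fun a => f a = m)) (fun a => c / M ≤ PA a e)]
        congr 1
        · rw [hHs]; simp only [Finset.filter_filter]
          refine Finset.sum_congr ?_ (fun _ _ => rfl)
          ext a; simp [and_comm]
        · rw [hLs]; simp only [Finset.filter_filter, not_le]
          refine Finset.sum_congr ?_ (fun _ _ => rfl)
          ext a; simp [and_comm]
      rw [hQ]
      refine le_trans (my_rpow_two_subadd
        (Finset.sum_nonneg fun a _ => hPA a e)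
        (Finset.sum_nonneg fun a _ => hPA a e) hp0.le hp1) ?_
      gcongr
      exact my_sum_rpow_subadd _ _ (fun a _ => hPA a e) hp0 hp1
    -- sum over m
    have h1 : ∑ m : Fin M,
          (∑ a ∈ Finset.univ.filter (fun a => f a = m), PA a e) ^ (1 - s) ≤
        (∑ a ∈ Hs, PA a e ^ (1 - s))
        + ∑ m : Fin M, (∑ a ∈ Ls.filter (fun a => f a = m), PA a e) ^ (1 - s) := by
      calc ∑ m : Fin M,
            (∑ a ∈ Finset.univ.filter (fun a => f a = m), PA a e) ^ (1 - s)
          ≤ ∑ m : Fin M, ((∑ a ∈ Hs.filter (fun a => f a = m), PA a e ^ (1 - s))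
              + (∑ a ∈ Ls.filter (fun a => f a = m), PA a e) ^ (1 - s)) :=
            Finset.sum_le_sum fun m _ => hsplit m
        _ = (∑ m : Fin M, ∑ a ∈ Hs.filter (fun a => f a = m), PA a e ^ (1 - s))
            + ∑ m : Fin M, (∑ a ∈ Ls.filter (fun a => f a = m), PA a e) ^ (1 - s) :=
            Finset.sum_add_distrib
        _ = _ := by rw [Finset.sum_fiberwise Hs f (fun a => PA a e ^ (1 - s))]
    -- uniform Jensen over m for the light part
    have hLsum : ∑ m : Fin M, ∑ a ∈ Ls.filter (fun a => f a = m), PA a e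
        = ∑ a ∈ Ls, PA a e := Finset.sum_fiberwise Ls f (fun a => PA a e)
    have h2 : (M : ℝ) ^ (-s) *
          ∑ m : Fin M, (∑ a ∈ Ls.filter (fun a => f a = m), PA a e) ^ (1 - s) ≤
        (∑ a ∈ Ls, PA a e) ^ (1 - s) := by
      have hw' : ∑ _m : Fin M, ((M : ℝ))⁻¹ = 1 := by
        simp [Finset.card_univ, mul_inv_cancel₀ hM0.ne']
      have hj := my_jensen_rpow Finset.univ (fun _ => ((M : ℝ))⁻¹)
        (fun m => ∑ a ∈ Ls.filter (fun a => f a = m), PA a e)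
        (fun _ _ => by positivity) hw'
        (fun m _ => Finset.sum_nonneg fun a _ => hPA a e) hp0 hp1
      simp only [← Finset.mul_sum] at hj
      rw [hLsum] at hj
      have hLnn : 0 ≤ ∑ a ∈ Ls, PA a e := Finset.sum_nonneg fun a _ => hPA a e
      have hmulp : ((M : ℝ)⁻¹ * ∑ a ∈ Ls, PA a e) ^ (1 - s)
          = (M : ℝ)⁻¹ ^ (1 - s) * (∑ a ∈ Ls, PA a e) ^ (1 - s) :=
        Real.mul_rpow (by positivity) hLnn
      rw [hmulp] at hj
      -- hj : M⁻¹ * ∑ (..)^(1-s) ≤ M⁻¹^(1-s) * L^(1-s)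
      have hfac : (M : ℝ) ^ (-s) * ((M : ℝ) * ((M : ℝ)⁻¹ ^ (1 - s))) = 1 := by
        rw [Real.inv_rpow hM0.le, ← Real.rpow_neg hM0.le]
        nth_rewrite 2 [← Real.rpow_one (M : ℝ)]
        rw [← Real.rpow_add hM0, ← Real.rpow_add hM0]
        norm_num
      calc (M : ℝ) ^ (-s) *
            ∑ m : Fin M, (∑ a ∈ Ls.filter (fun a => f a = m), PA a e) ^ (1 - s)
          = ((M : ℝ) ^ (-s) * (M : ℝ)) * ((M : ℝ)⁻¹ *
              ∑ m : Fin M, (∑ a ∈ Ls.filter (fun a => f a = m), PA a e) ^ (1 - s)) := by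
            rw [mul_assoc, ← mul_assoc (M : ℝ), mul_inv_cancel₀ hM0.ne', one_mul]
        _ ≤ ((M : ℝ) ^ (-s) * (M : ℝ)) *
              ((M : ℝ)⁻¹ ^ (1 - s) * (∑ a ∈ Ls, PA a e) ^ (1 - s)) := by
            have hnn : 0 ≤ (M : ℝ) ^ (-s) * (M : ℝ) := by positivity
            exact mul_le_mul_of_nonneg_left hj hnn
        _ = ((M : ℝ) ^ (-s) * ((M : ℝ) * ((M : ℝ)⁻¹ ^ (1 - s)))) *
              (∑ a ∈ Ls, PA a e) ^ (1 - s) := by ring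
        _ = (∑ a ∈ Ls, PA a e) ^ (1 - s) := by rw [hfac, one_mul]
    calc (M : ℝ) ^ (-s) * ∑ m : Fin M,
            (∑ a ∈ Finset.univ.filter (fun a => f a = m), PA a e) ^ (1 - s)
        ≤ (M : ℝ) ^ (-s) * ((∑ a ∈ Hs, PA a e ^ (1 - s))
            + ∑ m : Fin M, (∑ a ∈ Ls.filter (fun a => f a = m), PA a e) ^ (1 - s)) :=
          mul_le_mul_of_nonneg_left h1 hMs.le
      _ = (M : ℝ) ^ (-s) * (∑ a ∈ Hs, PA a e ^ (1 - s))
            + (M : ℝ) ^ (-s) *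
              ∑ m : Fin M, (∑ a ∈ Ls.filter (fun a => f a = m), PA a e) ^ (1 - s) :=
          mul_add _ _ _
      _ ≤ (M : ℝ) ^ (-s) * (∑ a ∈ Hs, PA a e ^ (1 - s))
            + (∑ a ∈ Ls, PA a e) ^ (1 - s) := add_le_add le_rfl h2
      _ = (∑ a ∈ Hs, PA a e ^ (1 - s) * (M : ℝ) ^ (-s))
            + (∑ a ∈ Ls, PA a e) ^ (1 - s) := by
          rw [Finset.mul_sum]
          congr 1
          exact Finset.sum_congr rfl fun a _ => by ring
  -- part 1
  have part1 : (M : ℝ) ^ (-s) * (∑ e, PE e * ∑ m : Fin M,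
        (∑ a ∈ Finset.univ.filter (fun a => f a = m), PA a e) ^ (1 - s)) ≤
      (∑ e, PE e *
          ∑ a ∈ Finset.univ.filter (fun a => c / M ≤ PA a e),
            PA a e ^ (1 - s) * (M : ℝ) ^ (-s)) +
        ∑ e, PE e *
          (∑ a ∈ Finset.univ.filter (fun a => PA a e < c / M), PA a e) ^ (1 - s) := by
    rw [Finset.mul_sum]
    calc ∑ e, (M : ℝ) ^ (-s) * (PE e * ∑ m : Fin M,
            (∑ a ∈ Finset.univ.filter (fun a => f a = m), PA a e) ^ (1 - s))
        = ∑ e, PE e * ((M : ℝ) ^ (-s) * ∑ m : Fin M,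
            (∑ a ∈ Finset.univ.filter (fun a => f a = m), PA a e) ^ (1 - s)) :=
          Finset.sum_congr rfl fun e _ => by ring
      _ ≤ ∑ e, PE e * ((∑ a ∈ Finset.univ.filter (fun a => c / M ≤ PA a e),
              PA a e ^ (1 - s) * (M : ℝ) ^ (-s))
            + (∑ a ∈ Finset.univ.filter (fun a => PA a e < c / M), PA a e) ^ (1 - s)) :=
          Finset.sum_le_sum fun e _ => mul_le_mul_of_nonneg_left (key e) (hPE e)
      _ = _ := by
          simp only [mul_add]
          exact Finset.sum_add_distrib
  refine ⟨part1, part1.trans (add_le_add ?_ ?_)⟩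
  · -- heavy term bound
    rw [Finset.mul_sum]
    refine Finset.sum_le_sum fun e _ => ?_
    rw [mul_left_comm]
    refine mul_le_mul_of_nonneg_left ?_ (hPE e)
    rw [Finset.mul_sum]
    refine Finset.sum_le_sum fun a ha => ?_
    have ha' : c / M ≤ PA a e := (Finset.mem_filter.1 ha).2
    have hcM : (0 : ℝ) < c / M := div_pos hc0 hM0
    have hPAp : 0 < PA a e := lt_of_lt_of_le hcM ha'
    have heq : PA a e ^ (1 - s) = PA a e * PA a e ^ (-s) := by
      rw [sub_eq_add_neg, Real.rpow_add hPAp, Real.rpow_one]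
    calc PA a e ^ (1 - s) * (M : ℝ) ^ (-s)
        = PA a e * (PA a e ^ (-s) * (M : ℝ) ^ (-s)) := by rw [heq]; ring
      _ ≤ PA a e * ((c / M) ^ (-s) * (M : ℝ) ^ (-s)) := by
          refine mul_le_mul_of_nonneg_left
            (mul_le_mul_of_nonneg_right
              (Real.rpow_le_rpow_of_nonpos hcM ha' (by linarith)) hMs.le) hPAp.le
      _ = c ^ (-s) * PA a e := by
          rw [Real.div_rpow hc0.le hM0.le, div_mul_cancel₀ _ (ne_of_gt hMs)]
          ring
  · -- light term: Jensen over e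
    exact my_jensen_rpow Finset.univ PE
      (fun e => ∑ a ∈ Finset.univ.filter (fun a => PA a e < c / M), PA a e)
      (fun e _ => hPE e) hPEsum
      (fun e _ => Finset.sum_nonneg fun a _ => hPA a e) hp0 hp1
end

section
/- Converse lower bound in the 1+s direction: Fix c > 1 and s ∈ [0,1]. Any function f : A → {1,…,M} satisfies exp(s C_{1+s}(f(A)|E|P_{AE})) ≥ P_{AE}{(a,e): P_{A|E}(a|e) ≥ c/M} · c^s + (P_{AE}{(a,e): P_{A|E}(a|e) < c/M})^{1+s}. -/
open Finset

/-- Converse lower bound in the `1+s` direction: for `c > 1`, `s ∈ (0,1]` and any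
function `f : A → {1,…,M}`,
`exp(s C_{1+s}(f(A)|E|P_{AE})) ≥ c^s · P_{AE}{P_{A|E} ≥ c/M} + (P_{AE}{P_{A|E} < c/M})^(1+s)`. -/
theorem converse_lower_bound_one_plus_s {A E : Type*} [Fintype A] [Fintype E]
    (M : ℕ) (hM : 0 < M) (f : A → Fin M)
    (PE : E → ℝ) (hPE : ∀ e, 0 ≤ PE e) (hPEsum : ∑ e, PE e = 1)
    (PA : A → E → ℝ) (hPA : ∀ a e, 0 ≤ PA a e) (hPAsum : ∀ e, ∑ a, PA a e = 1)
    (s : ℝ) (hs : 0 < s) (hs1 : s ≤ 1) (c : ℝ) (hc : 1 < c) :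
    (∑ e, PE e * ∑ a ∈ Finset.univ.filter (fun a => c / M ≤ PA a e), PA a e) * c ^ s +
        (∑ e, PE e *
          ∑ a ∈ Finset.univ.filter (fun a => PA a e < c / M), PA a e) ^ (1 + s) ≤
      (M : ℝ) ^ s * (∑ e, PE e * ∑ m : Fin M,
        (∑ a ∈ Finset.univ.filter (fun a => f a = m), PA a e) ^ (1 + s)) := by
  have hMpos : (0:ℝ) < M := by exact_mod_cast hM
  have hc0 : (0:ℝ) < c := lt_trans one_pos hc
  have hcM : (0:ℝ) ≤ c / M := by positivity
  set B : E → ℝ := fun e => ∑ a ∈ Finset.univ.filter (fun a => c / M ≤ PA a e), PA a e with hB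
  set S : E → ℝ := fun e => ∑ a ∈ Finset.univ.filter (fun a => PA a e < c / M), PA a e with hS
  set Q : E → Fin M → ℝ := fun e m => ∑ a ∈ Finset.univ.filter (fun a => f a = m), PA a e
    with hQ
  set Qb : E → Fin M → ℝ := fun e m =>
    ∑ a ∈ (Finset.univ.filter (fun a => c / M ≤ PA a e)).filter (fun a => f a = m), PA a e
    with hQb
  set Qs : E → Fin M → ℝ := fun e m =>
    ∑ a ∈ (Finset.univ.filter (fun a => PA a e < c / M)).filter (fun a => f a = m), PA a e
    with hQs
  have hQnn : ∀ e m, 0 ≤ Q e m := fun e m => Finset.sum_nonneg fun a _ => hPA a e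
  have hQbnn : ∀ e m, 0 ≤ Qb e m := fun e m => Finset.sum_nonneg fun a _ => hPA a e
  have hQsnn : ∀ e m, 0 ≤ Qs e m := fun e m => Finset.sum_nonneg fun a _ => hPA a e
  have hSnn : ∀ e, 0 ≤ S e := fun e => Finset.sum_nonneg fun a _ => hPA a e
  have hsplit : ∀ e m, Q e m = Qb e m + Qs e m := by
    intro e m
    have := Finset.sum_filter_add_sum_filter_not
      (Finset.univ.filter (fun a => f a = m)) (fun a => c / M ≤ PA a e) (fun a => PA a e)
    simp only [hQ, hQb, hQs, Finset.filter_filter]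
    rw [← this, Finset.filter_filter, Finset.filter_filter]
    congr 1
    · apply Finset.sum_congr _ (fun _ _ => rfl)
      apply Finset.filter_congr; intro a _; tauto
    · apply Finset.sum_congr _ (fun _ _ => rfl)
      apply Finset.filter_congr; intro a _
      constructor
      · rintro ⟨h1, h2⟩; exact ⟨lt_of_not_ge h2, h1⟩
      · rintro ⟨h1, h2⟩; exact ⟨h2, not_le_of_gt h1⟩
  have hQbsum : ∀ e, ∑ m : Fin M, Qb e m = B e := by
    intro e
    exact Finset.sum_fiberwise_of_maps_to (fun a _ => Finset.mem_univ (f a)) _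
  have hQssum : ∀ e, ∑ m : Fin M, Qs e m = S e := by
    intro e
    exact Finset.sum_fiberwise_of_maps_to (fun a _ => Finset.mem_univ (f a)) _
  -- key pointwise bound: Q^(1+s) ≥ Qb * (c/M)^s + Qs^(1+s)
  have hkey : ∀ e m, Qb e m * (c / M) ^ s + Qs e m ^ (1 + s) ≤ Q e m ^ (1 + s) := by
    intro e m
    have hQpow : Q e m ^ (1 + s) = (Qb e m + Qs e m) * (Qb e m + Qs e m) ^ s := by
      have hnn : 0 ≤ Qb e m + Qs e m := by rw [← hsplit e m]; exact hQnn e m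
      rw [hsplit e m, Real.rpow_add' hnn (by positivity), Real.rpow_one]
    have h1 : Qb e m * (c / M) ^ s ≤ Qb e m * (Qb e m + Qs e m) ^ s := by
      rcases eq_or_lt_of_le (hQbnn e m) with h0 | h0
      · rw [← h0]; simp
      · have hex : ∃ a ∈ (Finset.univ.filter (fun a => c / M ≤ PA a e)).filter
            (fun a => f a = m), 0 < PA a e := by
          by_contra h
          push_neg at h
          have : Qb e m ≤ 0 := Finset.sum_nonpos fun a ha => h a ha
          linarith
        obtain ⟨a, ha, hapos⟩ := hex
        simp only [Finset.mem_filter, Finset.mem_univ, true_and] at ha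
        have hle : c / M ≤ Qb e m + Qs e m := by
          calc c / M ≤ PA a e := ha.1
          _ ≤ Qb e m := Finset.single_le_sum (fun a _ => hPA a e)
              (by simp [Finset.mem_filter, ha.1, ha.2])
          _ ≤ Qb e m + Qs e m := by linarith [hQsnn e m]
        exact mul_le_mul_of_nonneg_left
          (Real.rpow_le_rpow hcM hle (le_of_lt hs)) (hQbnn e m)
    have h2 : Qs e m ^ (1 + s) ≤ Qs e m * (Qb e m + Qs e m) ^ s := by
      rw [Real.rpow_add' (hQsnn e m) (by positivity), Real.rpow_one]
      exact mul_le_mul_of_nonneg_left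
        (Real.rpow_le_rpow (hQsnn e m) (by linarith [hQbnn e m]) (le_of_lt hs)) (hQsnn e m)
    rw [hQpow, add_mul]
    exact add_le_add h1 h2
  -- power mean: S e ^ (1+s) ≤ M^s * ∑ m, Qs e m ^ (1+s)
  have hpm : ∀ e, S e ^ (1 + s) ≤ (M:ℝ) ^ s * ∑ m : Fin M, Qs e m ^ (1 + s) := by
    intro e
    have hjen := Real.rpow_arith_mean_le_arith_mean_rpow Finset.univ
      (fun _ : Fin M => (M:ℝ)⁻¹) (fun m => Qs e m)
      (fun m _ => by positivity)
      (by rw [Finset.sum_const, Finset.card_univ, Fintype.card_fin, nsmul_eq_mul]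
          field_simp)
      (fun m _ => hQsnn e m) (by linarith : (1:ℝ) ≤ 1 + s)
    have h1 : ∑ m : Fin M, (M:ℝ)⁻¹ * Qs e m = (M:ℝ)⁻¹ * S e := by
      rw [← Finset.mul_sum, hQssum]
    have h2 : ∑ m : Fin M, (M:ℝ)⁻¹ * Qs e m ^ (1 + s)
        = (M:ℝ)⁻¹ * ∑ m : Fin M, Qs e m ^ (1 + s) := by rw [← Finset.mul_sum]
    rw [h1, h2, Real.mul_rpow (by positivity) (hSnn e),
      Real.inv_rpow hMpos.le] at hjen
    have hMp : (0:ℝ) < (M:ℝ) ^ (1 + s) := Real.rpow_pos_of_pos hMpos _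
    calc S e ^ (1 + s)
        = (M:ℝ) ^ (1+s) * (((M:ℝ) ^ (1+s))⁻¹ * S e ^ (1+s)) := by field_simp
      _ ≤ (M:ℝ) ^ (1+s) * ((M:ℝ)⁻¹ * ∑ m : Fin M, Qs e m ^ (1+s)) :=
          mul_le_mul_of_nonneg_left hjen hMp.le
      _ = (M:ℝ) ^ s * ∑ m : Fin M, Qs e m ^ (1+s) := by
          rw [Real.rpow_add hMpos, Real.rpow_one]
          field_simp
  -- per-e bound
  have hperE : ∀ e, B e * c ^ s + S e ^ (1 + s)
      ≤ (M:ℝ) ^ s * ∑ m : Fin M, Q e m ^ (1 + s) := by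
    intro e
    have h1 : ∑ m : Fin M, (Qb e m * (c/M)^s + Qs e m ^ (1+s))
        ≤ ∑ m : Fin M, Q e m ^ (1+s) := Finset.sum_le_sum fun m _ => hkey e m
    rw [Finset.sum_add_distrib, ← Finset.sum_mul, hQbsum] at h1
    have hMs : (0:ℝ) ≤ (M:ℝ) ^ s := le_of_lt (Real.rpow_pos_of_pos hMpos s)
    have h2 : (M:ℝ)^s * (B e * (c/M)^s + ∑ m : Fin M, Qs e m ^ (1+s))
        ≤ (M:ℝ)^s * ∑ m : Fin M, Q e m ^ (1+s) := by
      exact mul_le_mul_of_nonneg_left h1 hMs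
    have h3 : (M:ℝ)^s * (B e * (c/M)^s) = B e * c ^ s := by
      rw [Real.div_rpow (le_of_lt hc0) (le_of_lt hMpos)]
      have : (M:ℝ)^s ≠ 0 := ne_of_gt (Real.rpow_pos_of_pos hMpos s)
      field_simp
    calc B e * c ^ s + S e ^ (1+s)
        ≤ B e * c ^ s + (M:ℝ)^s * ∑ m : Fin M, Qs e m ^ (1+s) := by
          have := hpm e; linarith
      _ = (M:ℝ)^s * (B e * (c/M)^s + ∑ m : Fin M, Qs e m ^ (1+s)) := by
          rw [mul_add, h3]
      _ ≤ _ := h2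
  -- Jensen over e for the S-part
  have hjenE : (∑ e, PE e * S e) ^ (1 + s) ≤ ∑ e, PE e * S e ^ (1 + s) :=
    Real.rpow_arith_mean_le_arith_mean_rpow Finset.univ PE S
      (fun e _ => hPE e) hPEsum (fun e _ => hSnn e) (by linarith)
  calc (∑ e, PE e * B e) * c ^ s + (∑ e, PE e * S e) ^ (1+s)
      ≤ (∑ e, PE e * B e) * c ^ s + ∑ e, PE e * S e ^ (1+s) := by linarith [hjenE]
    _ = ∑ e, PE e * (B e * c ^ s + S e ^ (1+s)) := by
        rw [Finset.sum_mul, ← Finset.sum_add_distrib]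
        exact Finset.sum_congr rfl fun e _ => by ring
    _ ≤ ∑ e, PE e * ((M:ℝ)^s * ∑ m : Fin M, Q e m ^ (1+s)) :=
        Finset.sum_le_sum fun e _ => mul_le_mul_of_nonneg_left (hperE e) (hPE e)
    _ = (M:ℝ)^s * ∑ e, PE e * ∑ m : Fin M, Q e m ^ (1+s) := by
        rw [Finset.mul_sum]; exact Finset.sum_congr rfl fun e _ => by ring
end

section
/- Key-rate consequence of data processing: For a joint i.i.d. source P_{AE}^n on A^n × E^n, any function f : A^n → {1,…,⌈e^{nR}⌉}, and any s > 0, the security measure satisfies C_{1+s}(f(A^n)|E^n|P_{AE}^n) ≥ nR - n·H_{1+s}(A|E|P_{AE}) - 1; in particular, if R > H_{1+s}(A|E|P_{AE}) then (1/n)·C_{1+s}(f(A^n)|E^n|P_{AE}^n) is bounded below by R - H_{1+s}(A|E|P_{AE}) - 1/n, and so cannot converge to 0. -/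
open Finset

/-- Real version of superadditivity of `x ↦ x ^ p` for `p ≥ 1`. -/
lemma real_add_rpow_le {x y p : ℝ} (hx : 0 ≤ x) (hy : 0 ≤ y) (hp : 1 ≤ p) :
    x ^ p + y ^ p ≤ (x + y) ^ p := by
  lift x to NNReal using hx
  lift y to NNReal using hy
  have := NNReal.add_rpow_le_rpow_add x y hp
  have h := (NNReal.coe_le_coe).2 this
  push_cast at h
  convert h using 2

/-- Sum of rpow's is at most rpow of the sum, for `p ≥ 1` and nonneg terms. -/
lemma sum_rpow_le_rpow_sum {ι : Type*} (T : Finset ι) (g : ι → ℝ)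
    (hg : ∀ i ∈ T, 0 ≤ g i) {p : ℝ} (hp : 1 ≤ p) :
    ∑ i ∈ T, g i ^ p ≤ (∑ i ∈ T, g i) ^ p := by
  classical
  induction T using Finset.cons_induction with
  | empty =>
      simp [Real.zero_rpow (by linarith : p ≠ 0)]
  | cons a T haT IH =>
      rw [Finset.sum_cons, Finset.sum_cons]
      have hga : 0 ≤ g a := hg a (Finset.mem_cons_self a T)
      have hgT : ∀ i ∈ T, 0 ≤ g i := fun i hi => hg i (Finset.mem_cons_of_mem hi)
      have hsum : 0 ≤ ∑ i ∈ T, g i := Finset.sum_nonneg hgT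
      calc g a ^ p + ∑ i ∈ T, g i ^ p
          ≤ g a ^ p + (∑ i ∈ T, g i) ^ p := by linarith [IH hgT]
        _ ≤ (g a + ∑ i ∈ T, g i) ^ p := real_add_rpow_le hga hsum hp

/-- Key-rate consequence of data processing: for the i.i.d. source `P^n`, any
function `f : Aⁿ → {1,…,⌈e^{nR}⌉}` and `s > 0`,
`C_{1+s}(f(Aⁿ)|Eⁿ|P^n) ≥ nR - n H_{1+s}(A|E|P) - 1`; in particular, if
`R > H_{1+s}(A|E|P)` then `(1/n) C_{1+s}(f(Aⁿ)|Eⁿ|P^n) ≥ R - H_{1+s}(A|E|P) - 1/n`. -/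
theorem key_rate_data_processing {A E : Type*} [Fintype A] [Fintype E]
    (P : A × E → ℝ) (hP : ∀ p, 0 ≤ P p) (hPsum : ∑ p, P p = 1)
    (n : ℕ) (hn : 0 < n) (R s : ℝ) (hs : 0 < s)
    (f : (Fin n → A) → Fin (Nat.ceil (Real.exp (n * R)))) :
    let Mn : ℝ := (Nat.ceil (Real.exp (n * R)) : ℝ)
    let PEn : (Fin n → E) → ℝ := fun e => ∏ i, ∑ a, P (a, e i)
    let Pfn : Fin (Nat.ceil (Real.exp (n * R))) → (Fin n → E) → ℝ :=
      fun m e => ∑ av ∈ Finset.univ.filter (fun av => f av = m), ∏ i, P (av i, e i)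
    let Hf : ℝ :=
      -(1/s) * Real.log (∑ e : Fin n → E,
        ∑ m, Pfn m e ^ (1 + s) * PEn e ^ (-s))
    let H1 : ℝ :=
      -(1/s) * Real.log (∑ p : A × E, P p ^ (1 + s) * (∑ a, P (a, p.2)) ^ (-s))
    (n * R - n * H1 - 1 ≤ Real.log Mn - Hf) ∧
      (H1 < R → R - H1 - 1/n ≤ (1/n) * (Real.log Mn - Hf)) := by
  classical
  intro Mn PEn Pfn Hf H1
  -- the single-letter "partition sum"
  set g : A × E → ℝ := fun p => P p ^ (1 + s) * (∑ a, P (a, p.2)) ^ (-s) with hg_def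
  have hg_nonneg : ∀ p, 0 ≤ g p := fun p =>
    mul_nonneg (Real.rpow_nonneg (hP p) _)
      (Real.rpow_nonneg (Finset.sum_nonneg fun a _ => hP _) _)
  set S1 : ℝ := ∑ p : A × E, g p with hS1_def
  -- S1 > 0
  have hS1pos : 0 < S1 := by
    obtain ⟨p0, _, hp0⟩ := Finset.exists_ne_zero_of_sum_ne_zero
      (by rw [hPsum]; norm_num : ∑ p : A × E, P p ≠ 0)
    have hp0pos : 0 < P p0 := lt_of_le_of_ne (hP p0) (Ne.symm hp0)
    have hPE : 0 < ∑ a, P (a, p0.2) := by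
      refine lt_of_lt_of_le hp0pos ?_
      exact Finset.single_le_sum (f := fun a => P (a, p0.2))
        (fun a _ => hP _) (Finset.mem_univ p0.1)
    refine Finset.sum_pos' (fun p _ => hg_nonneg p) ⟨p0, Finset.mem_univ _, ?_⟩
    exact mul_pos (Real.rpow_pos_of_pos hp0pos _) (Real.rpow_pos_of_pos hPE _)
  -- the multi-letter sums
  set Sn : ℝ := ∑ e : Fin n → E, ∑ a : Fin n → A,
      (∏ i, P (a i, e i)) ^ (1 + s) * PEn e ^ (-s) with hSn_def
  set Sf : ℝ := ∑ e : Fin n → E, ∑ m, Pfn m e ^ (1 + s) * PEn e ^ (-s) with hSf_def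
  -- additivity: Sn = S1 ^ n
  have hadd : Sn = S1 ^ n := by
    have h1 : S1 ^ n = ∏ _i : Fin n, S1 := by simp
    have h2 : S1 = ∑ y : E, ∑ x : A, g (x, y) := by
      rw [hS1_def, Fintype.sum_prod_type, Finset.sum_comm]
    rw [h1]
    conv_lhs => rw [hSn_def]
    conv_rhs => rw [h2]
    rw [Finset.prod_univ_sum (fun _ : Fin n => (Finset.univ : Finset E))
      (fun _ y => ∑ x : A, g (x, y))]
    rw [Fintype.piFinset_univ]
    refine Finset.sum_congr rfl fun e _ => ?_
    rw [Finset.prod_univ_sum (fun _ : Fin n => (Finset.univ : Finset A))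
      (fun i x => g (x, e i))]
    rw [Fintype.piFinset_univ]
    refine Finset.sum_congr rfl fun a _ => ?_
    have : ∏ i, g (a i, e i)
        = (∏ i, P (a i, e i) ^ (1 + s)) * ∏ i, (∑ x : A, P (x, e i)) ^ (-s) := by
      rw [← Finset.prod_mul_distrib]
    rw [Real.finset_prod_rpow Finset.univ (fun i => P (a i, e i))
        (fun i _ => hP _) (1 + s),
      Real.finset_prod_rpow Finset.univ (fun i => ∑ x : A, P (x, e i))
        (fun i _ => Finset.sum_nonneg fun x _ => hP _) (-s)] at this
    exact this.symm
  have hSnpos : 0 < Sn := hadd ▸ pow_pos hS1pos n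
  -- data processing: Sn ≤ Sf
  have hdpi : Sn ≤ Sf := by
    refine Finset.sum_le_sum fun e _ => ?_
    have hPEn : 0 ≤ PEn e ^ (-s) :=
      Real.rpow_nonneg (Finset.prod_nonneg fun i _ => Finset.sum_nonneg fun a _ => hP _) _
    rw [← Finset.sum_mul, ← Finset.sum_mul]
    refine mul_le_mul_of_nonneg_right ?_ hPEn
    -- split sum over a by fibers of f
    have hfib : (∑ a : Fin n → A, (∏ i, P (a i, e i)) ^ (1 + s))
        = ∑ m, ∑ av ∈ Finset.univ.filter (fun av => f av = m),
            (∏ i, P (av i, e i)) ^ (1 + s) := by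
      rw [Finset.sum_fiberwise_of_maps_to (fun a _ => Finset.mem_univ (f a))]
    rw [hfib]
    refine Finset.sum_le_sum fun m _ => ?_
    exact sum_rpow_le_rpow_sum _ _
      (fun av _ => Finset.prod_nonneg fun i _ => hP _) (by linarith : (1:ℝ) ≤ 1 + s)
  -- conclude Hf ≤ n * H1
  have hlog : Real.log Sn ≤ Real.log Sf := Real.log_le_log hSnpos hdpi
  have hHf : Hf ≤ n * H1 := by
    have h1 : Real.log Sn = n * Real.log S1 := by
      rw [hadd, Real.log_pow]
    have h2 : n * Real.log S1 ≤ Real.log Sf := h1 ▸ hlog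
    have hs' : 0 < 1 / s := by positivity
    show -(1/s) * Real.log Sf ≤ n * (-(1/s) * Real.log S1)
    nlinarith [h2]
  -- log Mn ≥ n R
  have hMn : (n : ℝ) * R ≤ Real.log Mn := by
    have h1 : Real.exp (n * R) ≤ Mn := Nat.le_ceil _
    have := Real.log_le_log (Real.exp_pos _) h1
    rwa [Real.log_exp] at this
  have hmain : (n : ℝ) * R - n * H1 - 1 ≤ Real.log Mn - Hf := by linarith
  refine ⟨hmain, fun _ => ?_⟩
  have hn' : (0 : ℝ) < n := by exact_mod_cast hn
  have := mul_le_mul_of_nonneg_left hmain (by positivity : (0:ℝ) ≤ 1 / n)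
  have heq : (1 / (n:ℝ)) * ((n:ℝ) * R - n * H1 - 1) = R - H1 - 1 / n := by
    field_simp
  linarith [heq ▸ this]
end
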